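/- arXiv:2401.03278 — 3 statements merged into one kernel-verified Lean document; each statement's English description precedes it below -/
import Mathlib

section
/- Let $k \geq 2$ and let $q_k = p_1 p_2 \cdots p_k$ be the product of the first $k$ primes. If $n$ is a positive integer such that $t(n+j) = t(q_k + j)$ for all $0 \leq j \leq q_k - 1$, then $n = q_k$. In particular, the observable $O(q_k, q_k+1, \ldots, 2q_k - 1)$ occurs exactly once. -/
/-- Planar rooted trees: a tree is a root with an ordered list of subtrees. -/
inductive PTree : Type
  | node : List PTree → PTree

private lemma factorization_lt {n p : ℕ} (hp : p ∈ n.primeFactors) :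
    n.factorization p < n := by
  obtain ⟨hprime, hdvd, hn⟩ := Nat.mem_primeFactors.mp hp
  calc n.factorization p < 2 ^ n.factorization p := Nat.lt_two_pow_self
    _ ≤ p ^ n.factorization p := Nat.pow_le_pow_left hprime.two_le _
    _ ≤ n := Nat.le_of_dvd (Nat.pos_of_ne_zero hn) (Nat.ordProj_dvd n p)

/-- The planar rooted tree `t(n)` of the prime tower factorization of `n`:
the root has one child for each prime factor `p` of `n` (in increasing order),
the corresponding subtree being the tree of the exponent `ν_p(n)`. -/
def primeTower (n : ℕ) : PTree :=
  PTree.node (((n.primeFactors.sort (· ≤ ·)).attach).map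
    (fun p => primeTower (n.factorization p.1)))
decreasing_by
  exact factorization_lt ((Finset.mem_sort _).mp p.2)

/-- The product of the first `k` primes (the `k`-th primorial). -/
noncomputable def primorialN (k : ℕ) : ℕ := ∏ i ∈ Finset.range k, Nat.nth Nat.Prime i

/- ### Auxiliary lemmas about `primeTower` -/

lemma primeTower_def (n : ℕ) : primeTower n =
    PTree.node ((n.primeFactors.sort (· ≤ ·)).map fun p => primeTower (n.factorization p)) := by
  rw [primeTower]
  congr 1
  exact List.attach_map_val (f := fun p => primeTower (n.factorization p))

lemma primeTower_one : primeTower 1 = PTree.node [] := by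
  rw [primeTower_def]; simp

lemma primeTower_children {n : ℕ} {l : List PTree} (h : primeTower n = PTree.node l) :
    (n.primeFactors.sort (· ≤ ·)).map (fun p => primeTower (n.factorization p)) = l := by
  rw [primeTower_def] at h
  injection h

lemma primeTower_card {n : ℕ} {l : List PTree} (h : primeTower n = PTree.node l) :
    n.primeFactors.card = l.length := by
  have := congrArg List.length (primeTower_children h)
  simpa [Finset.length_sort] using this

lemma primeTower_card_eq {m m' : ℕ} (h : primeTower m = primeTower m') :
    m.primeFactors.card = m'.primeFactors.card := by
  rw [primeTower_def m'] at h
  have h1 := primeTower_card h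
  simpa [Finset.length_sort] using h1

lemma eq_one_of_primeTower_nil {e : ℕ} (he : e ≠ 0) (h : primeTower e = PTree.node []) :
    e = 1 := by
  have hc := primeTower_card h
  simp only [List.length_nil, Finset.card_eq_zero] at hc
  rcases Nat.primeFactors_eq_empty.mp hc with h0 | h1
  · exact absurd h0 he
  · exact h1

lemma sort_pair {a b : ℕ} (hab : a < b) :
    ({a, b} : Finset ℕ).sort (· ≤ ·) = [a, b] := by
  have h1 : ∀ c ∈ ({b} : Finset ℕ), a ≤ c := by
    intro c hc; rw [Finset.mem_singleton] at hc; omega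
  have h2 : a ∉ ({b} : Finset ℕ) := by simp; omega
  rw [show ({a, b} : Finset ℕ) = insert a {b} from rfl,
    Finset.sort_insert _ h1 h2, Finset.sort_singleton]

/-- Extraction: a tree with a single child means a prime power. -/
lemma eq_pow_of_primeTower_single {m : ℕ} {T : PTree} (hm : m ≠ 0)
    (h : primeTower m = PTree.node [T]) :
    ∃ p e, p.Prime ∧ 1 ≤ e ∧ m = p ^ e ∧ primeTower e = T := by
  have hc : m.primeFactors.card = 1 := by simpa using primeTower_card h
  obtain ⟨p, hp⟩ := Finset.card_eq_one.mp hc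
  have hl := primeTower_children h
  rw [hp, Finset.sort_singleton] at hl
  simp only [List.map_cons, List.map_nil, List.cons.injEq, and_true] at hl
  have hpmem : p ∈ m.primeFactors := by rw [hp]; exact Finset.mem_singleton_self p
  have hppos : 0 < m.factorization p := by
    have : p ∈ m.factorization.support := by rwa [Nat.support_factorization]
    exact Nat.pos_of_ne_zero (Finsupp.mem_support_iff.mp this)
  refine ⟨p, m.factorization p, Nat.prime_of_mem_primeFactors hpmem, hppos, ?_, hl⟩
  conv_lhs => rw [← Nat.factorization_prod_pow_eq_self hm]
  rw [Finsupp.prod, Nat.support_factorization, hp, Finset.prod_singleton]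

/-- Extraction: an even number whose tree is `node [T, leaf]` is `2^a * v` with `v` an odd
prime. -/
lemma eq_two_pow_mul_prime {m : ℕ} {T : PTree} (hm : m ≠ 0) (h2 : 2 ∣ m)
    (h : primeTower m = PTree.node [T, PTree.node []]) :
    ∃ v, v.Prime ∧ v ≠ 2 ∧ m = 2 ^ (m.factorization 2) * v := by
  have hc : m.primeFactors.card = 2 := by simpa using primeTower_card h
  have h2mem : 2 ∈ m.primeFactors := Nat.mem_primeFactors.mpr ⟨Nat.prime_two, h2, hm⟩
  obtain ⟨a, b, hab, hpf⟩ := Finset.card_eq_two.mp hc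
  have h2ab : 2 = a ∨ 2 = b := by
    rw [hpf] at h2mem; simpa using h2mem
  obtain ⟨v, hv2, hpf2⟩ : ∃ v, v ≠ 2 ∧ m.primeFactors = {2, v} := by
    rcases h2ab with rfl | rfl
    · exact ⟨b, fun hh => hab hh.symm, hpf⟩
    · exact ⟨a, fun hh => hab hh, by rw [hpf, Finset.pair_comm]⟩
  have hvmem : v ∈ m.primeFactors := by rw [hpf2]; simp
  have hvp : v.Prime := Nat.prime_of_mem_primeFactors hvmem
  have hv3 : 2 < v := by have := hvp.two_le; omega
  have hl := primeTower_children h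
  rw [hpf2, sort_pair hv3] at hl
  simp only [List.map_cons, List.map_nil, List.cons.injEq, and_true] at hl
  obtain ⟨hl1, hl2⟩ := hl
  have hvfac : 0 < m.factorization v := by
    have : v ∈ m.factorization.support := by rwa [Nat.support_factorization]
    exact Nat.pos_of_ne_zero (Finsupp.mem_support_iff.mp this)
  have hve : m.factorization v = 1 := eq_one_of_primeTower_nil (by omega) hl2
  refine ⟨v, hvp, hv2, ?_⟩
  conv_lhs => rw [← Nat.factorization_prod_pow_eq_self hm]
  rw [Finsupp.prod, Nat.support_factorization, hpf2,
    Finset.prod_pair (by omega : (2:ℕ) ≠ v), hve, pow_one]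

/- ### Forward computations of trees -/

lemma primeTower_prime_pow {p e : ℕ} (hp : p.Prime) (he : e ≠ 0) :
    primeTower (p ^ e) = PTree.node [primeTower e] := by
  rw [primeTower_def]
  have hpf : (p ^ e).primeFactors = {p} := by
    rw [Nat.primeFactors_pow _ he, hp.primeFactors]
  rw [hpf, Finset.sort_singleton]
  have hfe : (p ^ e).factorization p = e := by
    rw [hp.factorization_pow, Finsupp.single_eq_same]
  simp only [List.map_cons, List.map_nil, hfe]

lemma primeTower_prime {p : ℕ} (hp : p.Prime) :
    primeTower p = PTree.node [PTree.node []] := by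
  have := primeTower_prime_pow hp one_ne_zero
  rw [pow_one, primeTower_one] at this
  exact this

lemma primeTower_two_pow_mul {a c : ℕ} (ha : a ≠ 0) (hc : c.Prime) (hc2 : 2 < c) :
    primeTower (2 ^ a * c) = PTree.node [primeTower a, PTree.node []] := by
  have h2a : (2:ℕ) ^ a ≠ 0 := by positivity
  have hpf : (2 ^ a * c).primeFactors = {2, c} := by
    rw [Nat.primeFactors_mul h2a hc.ne_zero, Nat.primeFactors_pow _ ha,
      Nat.prime_two.primeFactors, hc.primeFactors]
    rfl
  have hfac : (2 ^ a * c).factorization =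
      Finsupp.single 2 a + Finsupp.single c 1 := by
    rw [Nat.factorization_mul h2a hc.ne_zero, Nat.prime_two.factorization_pow,
      hc.factorization]
  rw [primeTower_def, hpf, sort_pair hc2]
  have h1 : (2 ^ a * c).factorization 2 = a := by
    rw [hfac, Finsupp.add_apply, Finsupp.single_eq_same,
      Finsupp.single_eq_of_ne' (by omega : c ≠ 2)]
    omega
  have h2 : (2 ^ a * c).factorization c = 1 := by
    rw [hfac, Finsupp.add_apply, Finsupp.single_eq_same,
      Finsupp.single_eq_of_ne' (by omega : (2:ℕ) ≠ c)]
  rw [List.map_cons, List.map_cons, List.map_nil, h1, h2, primeTower_one]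

/- ### Primorial facts -/

lemma nth_prime_prime (i : ℕ) : (Nat.nth Nat.Prime i).Prime :=
  Nat.nth_mem_of_infinite Nat.infinite_setOf_prime i

lemma primorialN_ne_zero (k : ℕ) : primorialN k ≠ 0 :=
  Finset.prod_ne_zero_iff.mpr fun i _ => (nth_prime_prime i).ne_zero

lemma primorialN_primeFactors (k : ℕ) :
    (primorialN k).primeFactors = (Finset.range k).image (Nat.nth Nat.Prime) := by
  induction k with
  | zero => simp [primorialN]
  | succ k ih =>
    rw [primorialN, Finset.prod_range_succ, ← primorialN,
      Nat.primeFactors_mul (primorialN_ne_zero k) (nth_prime_prime k).ne_zero, ih,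
      (nth_prime_prime k).primeFactors, Finset.range_add_one, Finset.image_insert,
      Finset.insert_eq, Finset.union_comm]

lemma primorialN_card (k : ℕ) : (primorialN k).primeFactors.card = k := by
  rw [primorialN_primeFactors,
    Finset.card_image_of_injective _ (Nat.nth_injective Nat.infinite_setOf_prime),
    Finset.card_range]

lemma nth_prime_zero : Nat.nth Nat.Prime 0 = 2 := by
  rw [Nat.nth_zero]
  have h2 : (2:ℕ) ∈ setOf Nat.Prime := Nat.prime_two
  have hmem : Nat.Prime (sInf (setOf Nat.Prime)) := Nat.sInf_mem (Set.nonempty_of_mem h2)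
  exact le_antisymm (Nat.sInf_le h2) hmem.two_le

lemma two_dvd_primorialN {k : ℕ} (hk : 1 ≤ k) : 2 ∣ primorialN k := by
  have h0 : (0:ℕ) ∈ Finset.range k := Finset.mem_range.mpr hk
  have := Finset.dvd_prod_of_mem (Nat.nth Nat.Prime) h0
  rwa [nth_prime_zero] at this

lemma six_le_primorialN {k : ℕ} (hk : 2 ≤ k) : 6 ≤ primorialN k := by
  have hcard := primorialN_card k
  have h2mem : 2 ∈ (primorialN k).primeFactors :=
    Nat.mem_primeFactors.mpr ⟨Nat.prime_two, two_dvd_primorialN (by omega), primorialN_ne_zero k⟩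
  obtain ⟨v, hvmem, hv2⟩ :=
    Finset.exists_mem_ne (s := (primorialN k).primeFactors) (by omega) 2
  have hvp : v.Prime := Nat.prime_of_mem_primeFactors hvmem
  have hv3 : 3 ≤ v := by have := hvp.two_le; omega
  have hco : Nat.Coprime 2 v := (Nat.coprime_primes Nat.prime_two hvp).mpr (Ne.symm hv2)
  have hdvd : 2 * v ∣ primorialN k :=
    hco.mul_dvd_of_dvd_of_dvd (two_dvd_primorialN (by omega))
      (Nat.dvd_of_mem_primeFactors hvmem)
  have := Nat.le_of_dvd (Nat.pos_of_ne_zero (primorialN_ne_zero k)) hdvd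
  omega

lemma primorialN_le_prod : ∀ (kk : ℕ) (S : Finset ℕ),
    (∀ p ∈ S, p.Prime) → S.card = kk → primorialN kk ≤ ∏ p ∈ S, p := by
  intro kk
  induction kk with
  | zero =>
    intro S hS hc
    rw [primorialN]
    simp only [Finset.range_zero, Finset.prod_empty]
    exact Finset.one_le_prod' fun p hp => (hS p hp).one_lt.le
  | succ k ih =>
    intro S hS hc
    have hne : S.Nonempty := Finset.card_pos.mp (by omega)
    set M := S.max' hne with hM
    have hMmem : M ∈ S := S.max'_mem hne
    have hnth : Nat.nth Nat.Prime k ≤ M := by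
      by_contra hlt
      push_neg at hlt
      have hsub : S ⊆ (Finset.range (Nat.nth Nat.Prime k)).filter Nat.Prime := by
        intro x hx
        simp only [Finset.mem_filter, Finset.mem_range]
        exact ⟨lt_of_le_of_lt (Finset.le_max' S x hx) hlt, hS x hx⟩
      have hle := Finset.card_le_card hsub
      rw [← Nat.count_eq_card_filter_range,
        Nat.count_nth_of_infinite Nat.infinite_setOf_prime] at hle
      omega
    have herase : (S.erase M).card = k := by
      rw [Finset.card_erase_of_mem hMmem]; omega
    have hih := ih (S.erase M) (fun p hp => hS p (Finset.mem_of_mem_erase hp)) herase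
    calc primorialN (k + 1) = primorialN k * Nat.nth Nat.Prime k := by
          rw [primorialN, primorialN, Finset.prod_range_succ]
      _ ≤ (∏ p ∈ S.erase M, p) * M := Nat.mul_le_mul hih hnth
      _ = M * ∏ p ∈ S.erase M, p := mul_comm _ _
      _ = ∏ p ∈ S, p := Finset.mul_prod_erase S (fun p => p) hMmem

lemma primorialN_le_of_card {n kk : ℕ} (hn : n ≠ 0) (h : n.primeFactors.card = kk) :
    primorialN kk ≤ n :=
  le_trans
    (primorialN_le_prod kk n.primeFactors (fun _ hp => Nat.prime_of_mem_primeFactors hp) h)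
    (Nat.le_of_dvd (Nat.pos_of_ne_zero hn) (Nat.prod_primeFactors_dvd n))

/-- If the pattern of trees `(t(q_k), …, t(2q_k - 1))` occurs starting at a positive
integer `n`, then `n = q_k`: the observable `O(q_k, …, 2q_k - 1)` occurs only once. -/
theorem stmt_3 (k : ℕ) (hk : 2 ≤ k) (n : ℕ) (hn : 1 ≤ n)
    (h : ∀ j : ℕ, j ≤ primorialN k - 1 →
      primeTower (n + j) = primeTower (primorialN k + j)) :
    n = primorialN k := by
  set q := primorialN k with hqdef
  have hq0 : q ≠ 0 := primorialN_ne_zero k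
  have hq2 : 2 ∣ q := two_dvd_primorialN (by omega)
  have hq6 : 6 ≤ q := six_le_primorialN hk
  have hqcard : q.primeFactors.card = k := primorialN_card k
  -- ω(n) = k, hence q ≤ n
  have h0 := h 0 (Nat.zero_le _)
  simp only [add_zero] at h0
  have hncard : n.primeFactors.card = k := by rw [primeTower_card_eq h0, hqcard]
  have hn0 : n ≠ 0 := by omega
  have hnq : q ≤ n := primorialN_le_of_card hn0 hncard
  -- n is even
  have hneven : 2 ∣ n := by
    by_contra hodd
    obtain ⟨P, hP, hqP, hP2q⟩ := Nat.exists_prime_lt_and_le_two_mul q hq0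
    have hPlt : P < 2 * q := by
      rcases Nat.lt_or_ge P (2 * q) with h' | h'
      · exact h'
      · exfalso
        have hPeq : P = 2 * q := by omega
        have : 2 ∣ P := by omega
        have := (Nat.prime_dvd_prime_iff_eq Nat.prime_two hP).mp this
        omega
    have hPodd : ¬ 2 ∣ P := by
      intro hdvd
      have := (Nat.prime_dvd_prime_iff_eq Nat.prime_two hP).mp hdvd
      omega
    set j := P - q with hj
    have hjq : j ≤ q - 1 := by omega
    have htree := h j hjq
    rw [show q + j = P by omega, primeTower_prime hP] at htree
    obtain ⟨r, e', hr, he', hne, hTe⟩ :=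
      eq_pow_of_primeTower_single (by omega : n + j ≠ 0) htree
    have he1 : e' = 1 := eq_one_of_primeTower_nil (by omega) hTe
    rw [he1, pow_one] at hne
    have h2r : 2 ∣ r := by omega
    have := (Nat.prime_dvd_prime_iff_eq Nat.prime_two hr).mp h2r
    omega
  -- the power of two in [q, 2q)
  set t := Nat.log 2 (2 * q - 1) with htdef
  have h2t_le : 2 ^ t ≤ 2 * q - 1 := Nat.pow_log_le_self 2 (by omega)
  have h2t_gt : 2 * q - 1 < 2 ^ (t + 1) := Nat.lt_pow_succ_log_self (by norm_num) _
  rw [pow_succ] at h2t_gt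
  have hq2t : q ≤ 2 ^ t := by omega
  have ht0 : t ≠ 0 := by
    intro h'
    rw [h'] at hq2t
    simp at hq2t
    omega
  have hqne : q ≠ 2 ^ t := by
    intro he
    have : q.primeFactors.card = 1 := by
      rw [he, Nat.primeFactors_pow _ ht0, Nat.prime_two.primeFactors, Finset.card_singleton]
    omega
  have hqlt : q < 2 ^ t := lt_of_le_of_ne hq2t hqne
  -- position of 2^t
  set j1 := 2 ^ t - q with hj1
  have htree1 := h j1 (by omega)
  rw [show q + j1 = 2 ^ t by omega, primeTower_prime_pow Nat.prime_two ht0] at htree1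
  obtain ⟨P₀, e, hP₀, hepos, hne1, _⟩ :=
    eq_pow_of_primeTower_single (by omega : n + j1 ≠ 0) htree1
  have h2t2 : 2 ∣ 2 ^ t := dvd_pow_self 2 ht0
  have hP₀2 : P₀ = 2 := by
    have h2d : 2 ∣ n + j1 := by omega
    rw [hne1] at h2d
    have h2P : (2:ℕ) ∣ P₀ := Nat.prime_two.prime.dvd_of_dvd_pow h2d
    exact ((Nat.prime_dvd_prime_iff_eq Nat.prime_two hP₀).mp h2P).symm
  rw [hP₀2] at hne1
  have hte : t ≤ e := by
    have h1 : 2 ^ t ≤ 2 ^ e := by omega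
    exact (Nat.pow_le_pow_iff_right (by norm_num)).mp h1
  by_cases hcase : e = t
  · rw [hcase] at hne1; omega
  have het : t < e := by omega
  set x := e - t with hxdef
  have hx1 : 1 ≤ x := by omega
  set y := 2 ^ x - 1 with hydef
  have h2x1 : 1 ≤ 2 ^ x := Nat.one_le_two_pow
  have hy1 : 1 ≤ y := by
    have : (2:ℕ) ^ 1 ≤ 2 ^ x := Nat.pow_le_pow_right (by norm_num) hx1
    omega
  have hsplit : 2 ^ e = 2 ^ t * 2 ^ x := by rw [← pow_add]; congr 1; omega
  have hty : 2 ^ t * y + 2 ^ t = 2 ^ e := by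
    rw [hsplit]
    calc 2 ^ t * y + 2 ^ t = 2 ^ t * (y + 1) := by ring
      _ = 2 ^ t * 2 ^ x := by congr 1; omega
  -- the anchor mechanism: each number 2^a * c (c an odd prime) in [q, 2q)
  -- forces c + 2^(t-a) * y to be prime
  have key : ∀ c a : ℕ, c.Prime → 2 < c → 1 ≤ a → a < t → q ≤ 2 ^ a * c →
      2 ^ a * c ≤ 2 * q - 1 → (c + 2 ^ (t - a) * y).Prime := by
    intro c a hc hc2 ha1 hat hqm hm2q
    set g := t - a with hgdef
    have hg1 : 1 ≤ g := by omega
    have hsplit2 : 2 ^ t = 2 ^ a * 2 ^ g := by rw [← pow_add]; congr 1; omega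
    set W := 2 ^ g * y with hWdef
    have hZ : 2 ^ t * y = 2 ^ a * W := by rw [hsplit2, mul_assoc]
    set V := c + W with hVdef
    have hVodd : ¬ 2 ∣ V := by
      have hWe : 2 ∣ W := Dvd.dvd.mul_right (dvd_pow_self 2 (by omega)) y
      have hcodd : ¬ 2 ∣ c := by
        intro hd
        have := (Nat.prime_dvd_prime_iff_eq Nat.prime_two hc).mp hd
        omega
      omega
    have hdistr : 2 ^ a * V = 2 ^ a * c + 2 ^ a * W := by rw [hVdef]; ring
    have hnj : n + (2 ^ a * c - q) = 2 ^ a * V := by omega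
    have htree2 := h (2 ^ a * c - q) (by omega)
    rw [show q + (2 ^ a * c - q) = 2 ^ a * c by omega,
      primeTower_two_pow_mul (by omega) hc hc2, hnj] at htree2
    have hV0 : V ≠ 0 := by omega
    have h2aV0 : 2 ^ a * V ≠ 0 := by positivity
    have h2dvd : 2 ∣ 2 ^ a * V := Dvd.dvd.mul_right (dvd_pow_self 2 (by omega)) V
    obtain ⟨v, hvp, hv2, hveq⟩ := eq_two_pow_mul_prime h2aV0 h2dvd htree2
    have hfac2 : (2 ^ a * V).factorization 2 = a := by
      rw [Nat.factorization_mul (by positivity) hV0, Finsupp.add_apply,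
        Nat.prime_two.factorization_pow, Finsupp.single_eq_same,
        Nat.factorization_eq_zero_of_not_dvd hVodd]
      omega
    rw [hfac2] at hveq
    have hVv : V = v := Nat.eq_of_mul_eq_mul_left (by positivity) hveq
    rw [hVv]
    exact hvp
  -- construction of anchors
  have anchor_exp : ∀ c : ℕ, 0 < c → c < q → ∃ a : ℕ, 1 ≤ a ∧
      q ≤ 2 ^ a * c ∧ 2 ^ a * c ≤ 2 * q - 1 := by
    intro c hc0 hcq
    set a := Nat.log 2 ((2 * q - 1) / c) with ha
    have hd0 : (2 * q - 1) / c ≠ 0 := by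
      have h1 : c ≤ 2 * q - 1 := by omega
      have := (Nat.one_le_div_iff hc0).mpr h1
      omega
    have h1 : 2 ^ a ≤ (2 * q - 1) / c := Nat.pow_log_le_self 2 hd0
    have h2 : (2 * q - 1) / c < 2 ^ (a + 1) := Nat.lt_pow_succ_log_self (by norm_num) _
    have hub : 2 ^ a * c ≤ 2 * q - 1 := (Nat.le_div_iff_mul_le hc0).mp h1
    have hlb : q ≤ 2 ^ a * c := by
      have h3 := (Nat.div_lt_iff_lt_mul hc0).mp h2
      have hr : 2 ^ (a + 1) * c = 2 * (2 ^ a * c) := by rw [pow_succ]; ring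
      omega
    have ha1 : 1 ≤ a := by
      by_contra h0
      have ha0 : a = 0 := by omega
      rw [ha0, pow_zero, one_mul] at hlb
      omega
    exact ⟨a, ha1, hlb, hub⟩
  obtain ⟨a3, ha3_1, ha3_lb, ha3_ub⟩ := anchor_exp 3 (by norm_num) (by omega)
  have ha3t : a3 < t := by
    by_contra hh
    push_neg at hh
    have : 2 ^ t ≤ 2 ^ a3 := Nat.pow_le_pow_right (by norm_num) hh
    omega
  have hV3 := key 3 a3 (by norm_num) (by norm_num) ha3_1 ha3t ha3_lb ha3_ub
  obtain ⟨a5, ha5_1, ha5_lb, ha5_ub⟩ := anchor_exp 5 (by norm_num) (by omega)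
  have ha5t2 : a5 + 2 ≤ t := by
    by_contra hh
    push_neg at hh
    have h' : 2 ^ t ≤ 2 ^ (a5 + 1) := Nat.pow_le_pow_right (by norm_num) (by omega)
    rw [pow_succ] at h'
    omega
  have ha5t3 : t ≤ a5 + 3 := by
    by_contra hh
    push_neg at hh
    have h' : 2 ^ (a5 + 4) ≤ 2 ^ t := Nat.pow_le_pow_right (by norm_num) (by omega)
    have hr : (2:ℕ) ^ (a5 + 4) = 16 * 2 ^ a5 := by rw [pow_add]; ring
    omega
  have h4z : ∀ z : ℕ, ∃ u, 4 ^ z = 3 * u + 1 := by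
    intro z
    induction z with
    | zero => exact ⟨0, rfl⟩
    | succ z ih =>
      obtain ⟨u, hu⟩ := ih
      exact ⟨4 * u + 1, by rw [pow_succ, hu]; ring⟩
  exfalso
  rcases Nat.even_or_odd x with hxe | hxo
  · -- x even : 3 ∣ y, use the c = 3 anchor
    obtain ⟨z, hz⟩ := hxe
    obtain ⟨u, hu⟩ := h4z z
    have h4 : (4:ℕ) ^ z = 2 ^ x := by
      rw [show (4:ℕ) = 2 ^ 2 by norm_num, ← pow_mul]
      congr 1
      omega
    have h3y : y = 3 * u := by omega
    have hdvd : 3 ∣ 3 + 2 ^ (t - a3) * y :=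
      ⟨1 + 2 ^ (t - a3) * u, by rw [h3y]; ring⟩
    have hpos : 0 < 2 ^ (t - a3) * y :=
      Nat.mul_pos (pow_pos (by norm_num) _) (by omega)
    rcases hV3.eq_one_or_self_of_dvd 3 hdvd with h' | h' <;> omega
  · -- x odd : y ≡ 1 (mod 3)
    obtain ⟨z, hz⟩ := hxo
    obtain ⟨u, hu⟩ := h4z z
    have h4 : 2 ^ x = 2 * 4 ^ z := by
      rw [hz, pow_succ, show (4:ℕ) = 2 ^ 2 by norm_num, ← pow_mul]
      ring
    have hy3 : y = 3 * (2 * u) + 1 := by omega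
    rcases (by omega : t = a5 + 2 ∨ t = a5 + 3) with ht5 | ht5
    · -- t - a5 = 2, use the c = 5 anchor
      have hV5 := key 5 a5 (by norm_num) (by norm_num) ha5_1 (by omega) ha5_lb ha5_ub
      rw [show t - a5 = 2 by omega] at hV5
      have hdvd : 3 ∣ 5 + 2 ^ 2 * y := ⟨3 + 8 * u, by rw [hy3]; ring⟩
      rcases hV5.eq_one_or_self_of_dvd 3 hdvd with h' | h' <;> omega
    · -- t - a5 = 3 : then 8q ≤ 5·2^t, and the c = 7 anchor has t - a7 = 3
      have h2t8 : (2:ℕ) ^ t = 8 * 2 ^ a5 := by rw [ht5, pow_add]; ring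
      have h8q : 8 * q ≤ 5 * 2 ^ t := by omega
      have hq7 : 7 < q := by
        by_contra hh
        push_neg at hh
        have hq6' : q = 6 := by omega
        have ht3 : t ≤ 3 := by
          by_contra ht4
          push_neg at ht4
          have : 2 ^ 4 ≤ 2 ^ t := Nat.pow_le_pow_right (by norm_num) (by omega)
          omega
        have : 2 ^ t ≤ 2 ^ 3 := Nat.pow_le_pow_right (by norm_num) ht3
        omega
      obtain ⟨a7, ha7_1, ha7_lb, ha7_ub⟩ := anchor_exp 7 (by norm_num) (by omega)
      have hlow : a7 + 3 ≤ t := by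
        by_contra hh
        push_neg at hh
        have h' : 2 ^ t ≤ 2 ^ (a7 + 2) := Nat.pow_le_pow_right (by norm_num) (by omega)
        have hr : (2:ℕ) ^ (a7 + 2) = 4 * 2 ^ a7 := by rw [pow_add]; ring
        omega
      have hhigh : t ≤ a7 + 3 := by
        by_contra hh
        push_neg at hh
        have h' : 2 ^ (a7 + 4) ≤ 2 ^ t := Nat.pow_le_pow_right (by norm_num) (by omega)
        have hr : (2:ℕ) ^ (a7 + 4) = 16 * 2 ^ a7 := by rw [pow_add]; ring
        omega
      have hV7 := key 7 a7 (by norm_num) (by norm_num) ha7_1 (by omega) ha7_lb ha7_ub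
      rw [show t - a7 = 3 by omega] at hV7
      have hdvd : 3 ∣ 7 + 2 ^ 3 * y := ⟨5 + 16 * u, by rw [hy3]; ring⟩
      rcases hV7.eq_one_or_self_of_dvd 3 hdvd with h' | h' <;> omega
end

section
/- There is an absolute constant $C$ such that $\sum_{n \leq x} 2^{E(n)} \leq C\, x \log x$ for all $x \geq 2$. -/
/-- `towerE n` is the number of edges of the prime-tower tree of `n`:
`E(1) = 0`, `E` is additive on coprime factorizations, and `E(p^ν) = E(ν) + 1`. -/
def towerE (n : ℕ) : ℕ :=
  ∑ p ∈ n.primeFactors.attach, (towerE (n.factorization p.1) + 1)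
decreasing_by
  exact factorization_lt p.2

lemma towerE_def (n : ℕ) :
    towerE n = ∑ p ∈ n.primeFactors, (towerE (n.factorization p) + 1) := by
  rw [towerE]
  exact Finset.sum_attach n.primeFactors (fun p => towerE (n.factorization p) + 1)

lemma towerE_one : towerE 1 = 0 := by
  rw [towerE_def]; simp

lemma prod_primeFactors_pow (n : ℕ) (hn : n ≠ 0) :
    ∏ p ∈ n.primeFactors, p ^ n.factorization p = n := by
  conv_rhs => rw [← Nat.factorization_prod_pow_eq_self hn]
  rfl

lemma two_mul_le_two_pow {ν : ℕ} (hν : 1 ≤ ν) : 2 * ν ≤ 2 ^ ν := by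
  induction ν with
  | zero => omega
  | succ k ih =>
    rcases Nat.eq_zero_or_pos k with rfl | hk
    · norm_num
    · 
      have h1 := ih hk
      have h2 : 2 ≤ 2 ^ k := Nat.one_lt_two_pow_iff.mpr (by omega)
      calc 2 * (k + 1) = 2 * k + 2 := by ring
        _ ≤ 2 ^ k + 2 ^ k := Nat.add_le_add h1 h2
        _ = 2 ^ (k + 1) := by ring

lemma two_pow_towerE_le : ∀ n : ℕ, n ≠ 0 → 2 ^ towerE n ≤ n := by
  intro n
  induction n using Nat.strong_induction_on with
  | _ n ih =>
    intro hn
    rw [towerE_def, ← Finset.prod_pow_eq_pow_sum]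
    calc ∏ p ∈ n.primeFactors, 2 ^ (towerE (n.factorization p) + 1)
        ≤ ∏ p ∈ n.primeFactors, p ^ n.factorization p := by
          apply Finset.prod_le_prod'
          intro p hp
          have hν : n.factorization p ≠ 0 := by
            rw [← Finsupp.mem_support_iff, Nat.support_factorization]; exact hp
          have hlt := factorization_lt hp
          have hprime := Nat.prime_of_mem_primeFactors hp
          calc 2 ^ (towerE (n.factorization p) + 1)
              = 2 * 2 ^ towerE (n.factorization p) := by ring
            _ ≤ 2 * n.factorization p := by
                have := ih _ hlt hν
                omega
            _ ≤ 2 ^ n.factorization p := two_mul_le_two_pow (by omega)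
            _ ≤ p ^ n.factorization p := Nat.pow_le_pow_left hprime.two_le _
      _ = n := prod_primeFactors_pow n hn
section ProdPrimes

variable {S : Finset ℕ} {e : ℕ → ℕ}

lemma prodpow_ne_zero (hS : ∀ p ∈ S, p.Prime) : (∏ p ∈ S, p ^ e p) ≠ 0 :=
  Finset.prod_ne_zero_iff.mpr fun p hp => pow_ne_zero _ (hS p hp).pos.ne'

lemma factorization_prodpow (hS : ∀ p ∈ S, p.Prime) (q : ℕ) :
    (∏ p ∈ S, p ^ e p).factorization q = if q ∈ S then e q else 0 := by
  rw [Nat.factorization_prod (fun p hp => pow_ne_zero _ (hS p hp).pos.ne')]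
  rw [Finset.sum_apply']
  rw [Finset.sum_congr rfl (fun p hp => by
    rw [Nat.Prime.factorization_pow (hS p hp), Finsupp.single_apply])]
  exact Finset.sum_ite_eq' S q e

lemma primeFactors_prodpow (hS : ∀ p ∈ S, p.Prime) (he : ∀ p ∈ S, e p ≠ 0) :
    (∏ p ∈ S, p ^ e p).primeFactors = S := by
  ext q
  rw [← Nat.support_factorization, Finsupp.mem_support_iff, factorization_prodpow hS]
  by_cases hq : q ∈ S <;> simp [hq, he]

end ProdPrimes

/-- squarefree part of `n` : product of primes dividing `n` exactly once -/
def sfPart (n : ℕ) : ℕ :=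
  ∏ p ∈ n.primeFactors.filter (fun p => n.factorization p = 1), p ^ 1

/-- powerful part of `n` -/
def pfPart (n : ℕ) : ℕ :=
  ∏ p ∈ n.primeFactors.filter (fun p => ¬ n.factorization p = 1), p ^ n.factorization p

lemma sf_primes (n : ℕ) :
    ∀ p ∈ n.primeFactors.filter (fun p => n.factorization p = 1), p.Prime :=
  fun p hp => Nat.prime_of_mem_primeFactors (Finset.mem_filter.mp hp).1

lemma pf_primes (n : ℕ) :
    ∀ p ∈ n.primeFactors.filter (fun p => ¬ n.factorization p = 1), p.Prime :=
  fun p hp => Nat.prime_of_mem_primeFactors (Finset.mem_filter.mp hp).1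

lemma pf_exp_ne (n : ℕ) :
    ∀ p ∈ n.primeFactors.filter (fun p => ¬ n.factorization p = 1),
      n.factorization p ≠ 0 := by
  intro p hp
  have h1 := (Finset.mem_filter.mp hp).1
  rw [← Finsupp.mem_support_iff, Nat.support_factorization]
  exact h1

lemma pf_exp_two (n : ℕ) :
    ∀ p ∈ n.primeFactors.filter (fun p => ¬ n.factorization p = 1),
      2 ≤ n.factorization p := by
  intro p hp
  have h2 := (Finset.mem_filter.mp hp).2
  have := pf_exp_ne n p hp
  omega

lemma sfPart_ne_zero (n : ℕ) : sfPart n ≠ 0 := prodpow_ne_zero (sf_primes n)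
lemma pfPart_ne_zero (n : ℕ) : pfPart n ≠ 0 := prodpow_ne_zero (pf_primes n)

lemma sf_mul_pf (n : ℕ) (hn : n ≠ 0) : sfPart n * pfPart n = n := by
  unfold sfPart pfPart
  have h1 : ∏ p ∈ n.primeFactors.filter (fun p => n.factorization p = 1), p ^ 1
      = ∏ p ∈ n.primeFactors.filter (fun p => n.factorization p = 1),
          p ^ n.factorization p :=
    Finset.prod_congr rfl (fun p hp => by rw [(Finset.mem_filter.mp hp).2])
  rw [h1, Finset.prod_filter_mul_prod_filter_not]
  exact prod_primeFactors_pow n hn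

lemma primeFactors_pfPart (n : ℕ) :
    (pfPart n).primeFactors = n.primeFactors.filter (fun p => ¬ n.factorization p = 1) :=
  primeFactors_prodpow (pf_primes n) (pf_exp_ne n)

lemma factorization_pfPart (n : ℕ) (q : ℕ)
    (hq : q ∈ n.primeFactors.filter (fun p => ¬ n.factorization p = 1)) :
    (pfPart n).factorization q = n.factorization q := by
  rw [pfPart, factorization_prodpow (pf_primes n), if_pos hq]

lemma powerful_pfPart (n : ℕ) :
    ∀ q ∈ (pfPart n).primeFactors, 2 ≤ (pfPart n).factorization q := by
  intro q hq
  rw [primeFactors_pfPart] at hq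
  rw [factorization_pfPart n q hq]
  exact pf_exp_two n q hq

lemma towerE_pfPart (n : ℕ) :
    towerE (pfPart n) = ∑ p ∈ n.primeFactors.filter (fun p => ¬ n.factorization p = 1),
      (towerE (n.factorization p) + 1) := by
  rw [towerE_def, primeFactors_pfPart]
  exact Finset.sum_congr rfl (fun p hp => by rw [factorization_pfPart n p hp])

lemma towerE_split (n : ℕ) (hn : n ≠ 0) :
    towerE n = (n.primeFactors.filter (fun p => n.factorization p = 1)).card
      + towerE (pfPart n) := by
  rw [towerE_def n, ← Finset.sum_filter_add_sum_filter_not n.primeFactors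
    (fun p => n.factorization p = 1), towerE_pfPart]
  congr 1
  rw [Finset.card_eq_sum_ones]
  exact Finset.sum_congr rfl (fun p hp => by
    rw [(Finset.mem_filter.mp hp).2, towerE_one])

lemma primeFactors_sfPart (n : ℕ) :
    (sfPart n).primeFactors = n.primeFactors.filter (fun p => n.factorization p = 1) :=
  primeFactors_prodpow (sf_primes n) (fun _ _ => one_ne_zero)

lemma factorization_sfPart (n : ℕ) (q : ℕ)
    (hq : q ∈ n.primeFactors.filter (fun p => n.factorization p = 1)) :
    (sfPart n).factorization q = 1 := by
  rw [sfPart, factorization_prodpow (sf_primes n), if_pos hq]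

lemma card_divisors_sfPart (n : ℕ) :
    (sfPart n).divisors.card
      = 2 ^ (n.primeFactors.filter (fun p => n.factorization p = 1)).card := by
  rw [Nat.card_divisors (sfPart_ne_zero n), primeFactors_sfPart]
  have h1 : ∀ q ∈ n.primeFactors.filter (fun p => n.factorization p = 1),
      (sfPart n).factorization q + 1 = 2 := by
    intro q hq; rw [factorization_sfPart n q hq]
  rw [Finset.prod_congr rfl h1]
  exact Finset.prod_const 2

lemma one_le_sfPart (n : ℕ) : 1 ≤ sfPart n := Nat.one_le_iff_ne_zero.mpr (sfPart_ne_zero n)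
lemma one_le_pfPart (n : ℕ) : 1 ≤ pfPart n := Nat.one_le_iff_ne_zero.mpr (pfPart_ne_zero n)

lemma pfPart_le (n : ℕ) (hn : n ≠ 0) : pfPart n ≤ n := by
  conv_rhs => rw [← sf_mul_pf n hn]
  exact Nat.le_mul_of_pos_left _ (one_le_sfPart n)

lemma sfPart_le (n : ℕ) (hn : n ≠ 0) : sfPart n ≤ n := by
  conv_rhs => rw [← sf_mul_pf n hn]
  exact Nat.le_mul_of_pos_right _ (one_le_pfPart n)
lemma nu4 (ν : ℕ) : ν ^ 4 ≤ 2 ^ (ν + 12) := by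
  induction ν with
  | zero => norm_num
  | succ k ih =>
    rcases le_or_gt k 15 with hk | hk
    · interval_cases k <;> norm_num
    · have h1 : (k + 1) ^ 4 ≤ 2 * k ^ 4 := by
        have e : (k + 1) ^ 4 = k ^ 4 + (4 * k ^ 3 + 6 * k ^ 2 + 4 * k + 1) := by ring
        have e0 : 16 * k ^ 3 ≤ k ^ 4 := by
          calc 16 * k ^ 3 ≤ k * k ^ 3 := Nat.mul_le_mul_right _ (by omega)
            _ = k ^ 4 := by ring
        have e1 : k ^ 2 ≤ k ^ 3 := Nat.pow_le_pow_right (by omega) (by omega)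
        have e2 : k ≤ k ^ 3 := by
          calc k = k ^ 1 := (pow_one k).symm
            _ ≤ k ^ 3 := Nat.pow_le_pow_right (by omega) (by omega)
        have e3 : 1 ≤ k ^ 3 := Nat.one_le_pow _ _ (by omega)
        linarith
      calc (k + 1) ^ 4 ≤ 2 * k ^ 4 := h1
        _ ≤ 2 * 2 ^ (k + 12) := Nat.mul_le_mul_left 2 ih
        _ = 2 ^ (k + 1 + 12) := by ring

lemma pow17 (ν : ℕ) (hν : 2 ≤ ν) : 16 * ν ^ 4 ≤ 17 ^ ν := by
  induction ν with
  | zero => omega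
  | succ k ih =>
    rcases le_or_gt k 1 with hk | hk
    · interval_cases k <;> simp_all
    · have ihk := ih (by omega)
      have h1 : (k + 1) ^ 4 ≤ 16 * k ^ 4 := by
        calc (k + 1) ^ 4 ≤ (2 * k) ^ 4 := Nat.pow_le_pow_left (by omega) 4
          _ = 16 * k ^ 4 := by ring
      calc 16 * (k + 1) ^ 4 ≤ 16 * (16 * k ^ 4) := Nat.mul_le_mul_left 16 h1
        _ ≤ 16 * 17 ^ k := Nat.mul_le_mul_left 16 ihk
        _ ≤ 17 * 17 ^ k := Nat.mul_le_mul_right _ (by norm_num)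
        _ = 17 ^ (k + 1) := by ring

lemma key_ineq {p ν : ℕ} (hp : p.Prime) (hν : 2 ≤ ν) :
    (2 * ν) ^ 4 ≤ (if p ≤ 13 then 2 ^ 16 else 1) * p ^ ν := by
  by_cases hple : p ≤ 13
  · rw [if_pos hple]
    calc (2 * ν) ^ 4 = 16 * ν ^ 4 := by ring
      _ ≤ 16 * 2 ^ (ν + 12) := Nat.mul_le_mul_left 16 (nu4 ν)
      _ = 2 ^ 16 * 2 ^ ν := by rw [pow_add]; ring
      _ ≤ 2 ^ 16 * p ^ ν := Nat.mul_le_mul_left _ (Nat.pow_le_pow_left hp.two_le ν)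
  · rw [if_neg hple, one_mul]
    have hp17 : 17 ≤ p := by
      by_contra h
      push_neg at h hple
      interval_cases p <;> revert hp <;> decide
    calc (2 * ν) ^ 4 = 16 * ν ^ 4 := by ring
      _ ≤ 17 ^ ν := pow17 ν hν
      _ ≤ p ^ ν := Nat.pow_le_pow_left hp17 ν

lemma prodB_le (S : Finset ℕ) :
    (∏ p ∈ S, (if p ≤ 13 then 2 ^ 16 else 1 : ℕ)) ≤ 2 ^ 224 := by
  rw [← Finset.prod_filter_mul_prod_filter_not S (fun p => p ≤ 13)]
  have h1 : ∏ p ∈ S.filter (fun p => p ≤ 13), (if p ≤ 13 then 2 ^ 16 else 1 : ℕ)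
      = (2 ^ 16) ^ (S.filter (fun p => p ≤ 13)).card := by
    have he : ∀ p ∈ S.filter (fun p => p ≤ 13), (if p ≤ 13 then 2 ^ 16 else 1 : ℕ) = 2 ^ 16 :=
      fun p hp => if_pos (Finset.mem_filter.mp hp).2
    rw [Finset.prod_congr rfl he]
    exact Finset.prod_const _
  have h2 : ∏ p ∈ S.filter (fun p => ¬ p ≤ 13), (if p ≤ 13 then 2 ^ 16 else 1 : ℕ) = 1 :=
    Finset.prod_eq_one (fun p hp => if_neg (Finset.mem_filter.mp hp).2)
  rw [h1, h2, mul_one]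
  have hsub : S.filter (fun p => p ≤ 13) ⊆ Finset.range 14 := by
    intro p hp
    exact Finset.mem_range.mpr (by have := (Finset.mem_filter.mp hp).2; omega)
  have hcard : (S.filter (fun p => p ≤ 13)).card ≤ 14 := by
    calc (S.filter (fun p => p ≤ 13)).card ≤ (Finset.range 14).card := Finset.card_le_card hsub
      _ = 14 := Finset.card_range 14
  calc (2 ^ 16) ^ (S.filter (fun p => p ≤ 13)).card ≤ (2 ^ 16) ^ 14 :=
        Nat.pow_le_pow_right (by norm_num) hcard
    _ = 2 ^ 224 := by norm_num

lemma powerful_bound (m : ℕ) (hm : m ≠ 0)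
    (hpow : ∀ p ∈ m.primeFactors, 2 ≤ m.factorization p) :
    (2 ^ towerE m) ^ 4 ≤ 2 ^ 224 * m := by
  have h1 : 2 ^ towerE m ≤ ∏ p ∈ m.primeFactors, 2 * m.factorization p := by
    rw [towerE_def, ← Finset.prod_pow_eq_pow_sum]
    apply Finset.prod_le_prod'
    intro p hp
    have hν : m.factorization p ≠ 0 := by
      rw [← Finsupp.mem_support_iff, Nat.support_factorization]; exact hp
    have h2 := two_pow_towerE_le (m.factorization p) hν
    calc 2 ^ (towerE (m.factorization p) + 1)
        = 2 * 2 ^ towerE (m.factorization p) := by ring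
      _ ≤ 2 * m.factorization p := by omega
  calc (2 ^ towerE m) ^ 4
      ≤ (∏ p ∈ m.primeFactors, 2 * m.factorization p) ^ 4 := Nat.pow_le_pow_left h1 4
    _ = ∏ p ∈ m.primeFactors, (2 * m.factorization p) ^ 4 := by rw [Finset.prod_pow]
    _ ≤ ∏ p ∈ m.primeFactors,
          ((if p ≤ 13 then 2 ^ 16 else 1) * p ^ m.factorization p) :=
        Finset.prod_le_prod' (fun p hp =>
          key_ineq (Nat.prime_of_mem_primeFactors hp) (hpow p hp))
    _ = (∏ p ∈ m.primeFactors, (if p ≤ 13 then 2 ^ 16 else 1 : ℕ))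
          * ∏ p ∈ m.primeFactors, p ^ m.factorization p := Finset.prod_mul_distrib
    _ ≤ 2 ^ 224 * m := by
        rw [prod_primeFactors_pow m hm]
        exact Nat.mul_le_mul_right m (prodB_le _)
/-- `APart m` : the `a` in `m = a² b³` for powerful `m`. -/
def APart (m : ℕ) : ℕ :=
  ∏ p ∈ m.primeFactors, p ^ ((m.factorization p - 3 * (m.factorization p % 2)) / 2)

/-- `BPart m` : the `b` in `m = a² b³` for powerful `m`. -/
def BPart (m : ℕ) : ℕ := ∏ p ∈ m.primeFactors, p ^ (m.factorization p % 2)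

lemma AB_eq (m : ℕ) (hm : m ≠ 0)
    (hpow : ∀ p ∈ m.primeFactors, 2 ≤ m.factorization p) :
    APart m ^ 2 * BPart m ^ 3 = m := by
  unfold APart BPart
  rw [← Finset.prod_pow, ← Finset.prod_pow, ← Finset.prod_mul_distrib]
  have hcongr : ∀ p ∈ m.primeFactors,
      (p ^ ((m.factorization p - 3 * (m.factorization p % 2)) / 2)) ^ 2
        * (p ^ (m.factorization p % 2)) ^ 3 = p ^ m.factorization p := by
    intro p hp
    rw [← pow_mul, ← pow_mul, ← pow_add]
    congr 1
    have := hpow p hp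
    omega
  rw [Finset.prod_congr rfl hcongr]
  exact prod_primeFactors_pow m hm

lemma APart_pos (m : ℕ) : 0 < APart m :=
  Finset.prod_pos fun p hp => pow_pos (Nat.prime_of_mem_primeFactors hp).pos _

lemma BPart_pos (m : ℕ) : 0 < BPart m :=
  Finset.prod_pos fun p hp => pow_pos (Nat.prime_of_mem_primeFactors hp).pos _

lemma APart_le (m : ℕ) (hm : m ≠ 0)
    (hpow : ∀ p ∈ m.primeFactors, 2 ≤ m.factorization p) : APart m ≤ m := by
  refine Nat.le_of_dvd (Nat.pos_of_ne_zero hm) ?_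
  exact ⟨APart m * BPart m ^ 3, ((AB_eq m hm hpow).symm).trans (by ring)⟩

lemma BPart_le (m : ℕ) (hm : m ≠ 0)
    (hpow : ∀ p ∈ m.primeFactors, 2 ≤ m.factorization p) : BPart m ≤ m := by
  refine Nat.le_of_dvd (Nat.pos_of_ne_zero hm) ?_
  exact ⟨APart m ^ 2 * BPart m ^ 2, ((AB_eq m hm hpow).symm).trans (by ring)⟩

lemma rpow_AB (m : ℕ) (hm : m ≠ 0)
    (hpow : ∀ p ∈ m.primeFactors, 2 ≤ m.factorization p) :
    (m : ℝ) ^ (-(3/4) : ℝ)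
      = (APart m : ℝ) ^ (-(3/2) : ℝ) * (BPart m : ℝ) ^ (-(9/4) : ℝ) := by
  have hA : (0:ℝ) ≤ (APart m : ℝ) := Nat.cast_nonneg _
  have hB : (0:ℝ) ≤ (BPart m : ℝ) := Nat.cast_nonneg _
  have h0 := AB_eq m hm hpow
  have h1 : (m : ℝ) = (APart m : ℝ) ^ (2:ℕ) * (BPart m : ℝ) ^ (3:ℕ) := by
    exact_mod_cast congrArg (fun t : ℕ => (t : ℝ)) h0.symm
  rw [h1, Real.mul_rpow (by positivity) (by positivity)]
  rw [← Real.rpow_natCast (APart m : ℝ) 2, ← Real.rpow_natCast (BPart m : ℝ) 3]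
  rw [← Real.rpow_mul hA, ← Real.rpow_mul hB]
  norm_num
lemma divisors_eq_filter (s y : ℕ) (hs1 : 1 ≤ s) (hsy : s ≤ y) :
    s.divisors = (Finset.Icc 1 y).filter (fun a => a ∣ s) := by
  ext a
  rw [Nat.mem_divisors, Finset.mem_filter, Finset.mem_Icc]
  constructor
  · rintro ⟨hdvd, hs⟩
    have ha : 0 < a := Nat.pos_of_dvd_of_pos hdvd (by omega)
    exact ⟨⟨ha, (Nat.le_of_dvd (by omega) hdvd).trans hsy⟩, hdvd⟩
  · rintro ⟨_, hdvd⟩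
    exact ⟨hdvd, by omega⟩

lemma multiples_card (a y : ℕ) :
    ((Finset.Icc 1 y).filter (fun s => a ∣ s)).card = y / a := by
  rw [← Nat.card_multiples' y a]
  congr 1
  ext k
  simp only [Finset.mem_filter, Finset.mem_Icc, Finset.mem_range, Nat.lt_succ_iff]
  omega

lemma sum_divisors_card_eq (y : ℕ) :
    ∑ s ∈ Finset.Icc 1 y, s.divisors.card = ∑ a ∈ Finset.Icc 1 y, y / a := by
  have h1 : ∀ s ∈ Finset.Icc 1 y, s.divisors.card
      = ∑ a ∈ Finset.Icc 1 y, if a ∣ s then 1 else 0 := by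
    intro s hs
    rw [Finset.mem_Icc] at hs
    rw [divisors_eq_filter s y hs.1 hs.2]
    exact Finset.card_filter _ _
  rw [Finset.sum_congr rfl h1, Finset.sum_comm]
  refine Finset.sum_congr rfl fun a _ => ?_
  rw [← multiples_card a y]
  exact (Finset.card_filter _ _).symm

lemma harmonic_bound (y : ℕ) :
    ∑ a ∈ Finset.Icc 1 y, ((a : ℝ))⁻¹ ≤ 1 + Real.log y := by
  have h1 : (harmonic y : ℝ) = ∑ a ∈ Finset.Icc 1 y, ((a : ℝ))⁻¹ := by
    rw [harmonic_eq_sum_Icc]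
    push_cast
    rfl
  rw [← h1]
  exact harmonic_le_one_add_log y

lemma sum_divisors_card_le (y : ℕ) :
    ∑ s ∈ Finset.Icc 1 y, (s.divisors.card : ℝ) ≤ y * (1 + Real.log y) := by
  have h1 : ∑ s ∈ Finset.Icc 1 y, (s.divisors.card : ℝ)
      = ∑ a ∈ Finset.Icc 1 y, ((y / a : ℕ) : ℝ) := by
    rw [← Nat.cast_sum, ← Nat.cast_sum, sum_divisors_card_eq]
  rw [h1]
  calc ∑ a ∈ Finset.Icc 1 y, ((y / a : ℕ) : ℝ)
      ≤ ∑ a ∈ Finset.Icc 1 y, (y : ℝ) / a :=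
        Finset.sum_le_sum fun a _ => Nat.cast_div_le
    _ = (y : ℝ) * ∑ a ∈ Finset.Icc 1 y, ((a : ℝ))⁻¹ := by
        rw [Finset.mul_sum]
        exact Finset.sum_congr rfl fun a _ => div_eq_mul_inv _ _
    _ ≤ (y : ℝ) * (1 + Real.log y) := by
        apply mul_le_mul_of_nonneg_left (harmonic_bound y) (Nat.cast_nonneg y)
lemma sum_le_sum_of_maps {ι κ : Type*} [DecidableEq κ] (s : Finset ι) (t : Finset κ)
    (φ : ι → κ) (g : κ → ℝ)
    (hinj : ∀ i ∈ s, ∀ j ∈ s, φ i = φ j → i = j)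
    (hmap : ∀ i ∈ s, φ i ∈ t) (hg : ∀ j ∈ t, 0 ≤ g j) :
    ∑ i ∈ s, g (φ i) ≤ ∑ j ∈ t, g j := by
  rw [← Finset.sum_image hinj]
  exact Finset.sum_le_sum_of_subset_of_nonneg (Finset.image_subset_iff.mpr hmap)
    (fun j hj _ => hg j hj)

noncomputable def K32 : ℝ := ∑' n : ℕ, (n : ℝ) ^ (-(3/2) : ℝ)
noncomputable def K94 : ℝ := ∑' n : ℕ, (n : ℝ) ^ (-(9/4) : ℝ)

lemma summable32 : Summable (fun n : ℕ => (n : ℝ) ^ (-(3/2) : ℝ)) :=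
  Real.summable_nat_rpow.mpr (by norm_num)

lemma summable94 : Summable (fun n : ℕ => (n : ℝ) ^ (-(9/4) : ℝ)) :=
  Real.summable_nat_rpow.mpr (by norm_num)

lemma sum_rpow_le_K32 (s : Finset ℕ) : ∑ a ∈ s, (a : ℝ) ^ (-(3/2) : ℝ) ≤ K32 :=
  Summable.sum_le_tsum s (fun a _ => Real.rpow_nonneg (Nat.cast_nonneg a) _) summable32

lemma sum_rpow_le_K94 (s : Finset ℕ) : ∑ a ∈ s, (a : ℝ) ^ (-(9/4) : ℝ) ≤ K94 :=
  Summable.sum_le_tsum s (fun a _ => Real.rpow_nonneg (Nat.cast_nonneg a) _) summable94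

lemma K32_nonneg : 0 ≤ K32 := tsum_nonneg fun n => Real.rpow_nonneg (Nat.cast_nonneg n) _
lemma K94_nonneg : 0 ≤ K94 := tsum_nonneg fun n => Real.rpow_nonneg (Nat.cast_nonneg n) _

/-- pointwise bound for powerful `m` : `2^(E m) / m ≤ 2^56 * m^(-3/4)` -/
lemma powerful_term_bound (m : ℕ) (hm : m ≠ 0)
    (hpow : ∀ p ∈ m.primeFactors, 2 ≤ m.factorization p) :
    (2 : ℝ) ^ towerE m / m ≤ 2 ^ 56 * (m : ℝ) ^ (-(3/4) : ℝ) := by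
  have hmpos : (0 : ℝ) < m := by exact_mod_cast Nat.pos_of_ne_zero hm
  have hnat := powerful_bound m hm hpow
  have hcast : ((2 : ℝ) ^ towerE m) ^ (4 : ℕ) ≤ 2 ^ 224 * (m : ℝ) := by
    exact_mod_cast hnat
  have h2 : (2 : ℝ) ^ towerE m ≤ (2 ^ 224 * (m : ℝ)) ^ (4⁻¹ : ℝ) := by
    have ha : (0 : ℝ) ≤ (2 : ℝ) ^ towerE m := by positivity
    have hb : (2 : ℝ) ^ towerE m = (((2 : ℝ) ^ towerE m) ^ (4 : ℕ)) ^ (4⁻¹ : ℝ) := by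
      rw [← Real.rpow_natCast ((2 : ℝ) ^ towerE m) 4, ← Real.rpow_mul ha]
      norm_num
    rw [hb]
    exact Real.rpow_le_rpow (by positivity) hcast (by norm_num)
  have h3 : (2 ^ 224 * (m : ℝ)) ^ (4⁻¹ : ℝ) = 2 ^ 56 * (m : ℝ) ^ (4⁻¹ : ℝ) := by
    rw [Real.mul_rpow (by positivity) (by positivity)]
    congr 1
    have : (2 : ℝ) ^ (224 : ℕ) = ((2 : ℝ) ^ (56 : ℕ)) ^ (4 : ℕ) := by norm_num
    rw [this, ← Real.rpow_natCast (((2:ℝ) ^ (56:ℕ))) 4, ← Real.rpow_mul (by positivity)]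
    norm_num
  rw [div_le_iff₀ hmpos]
  calc (2 : ℝ) ^ towerE m ≤ 2 ^ 56 * (m : ℝ) ^ (4⁻¹ : ℝ) := h3 ▸ h2
    _ = 2 ^ 56 * ((m : ℝ) ^ (-(3/4) : ℝ) * m) := by
        congr 1
        have h4 : (m:ℝ) ^ (-(3/4):ℝ) * (m:ℝ) = (m:ℝ) ^ ((-(3/4) : ℝ) + 1) := by
          rw [Real.rpow_add hmpos, Real.rpow_one]
        rw [h4]
        norm_num
    _ = 2 ^ 56 * (m : ℝ) ^ (-(3/4) : ℝ) * m := by ring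

/-- The sum over powerful numbers of `2^(E m)/m` is bounded. -/
lemma powerful_sum_bound (x : ℕ) :
    ∑ m ∈ (Finset.Icc 1 x).filter
        (fun m => ∀ p ∈ m.primeFactors, 2 ≤ m.factorization p),
      (2 : ℝ) ^ towerE m / m ≤ 2 ^ 56 * (K32 * K94) := by
  set M := (Finset.Icc 1 x).filter
      (fun m => ∀ p ∈ m.primeFactors, 2 ≤ m.factorization p) with hM
  have hmem : ∀ m ∈ M, m ≠ 0 ∧ m ≤ x ∧ ∀ p ∈ m.primeFactors, 2 ≤ m.factorization p := by
    intro m hm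
    rw [hM, Finset.mem_filter, Finset.mem_Icc] at hm
    exact ⟨by omega, hm.1.2, hm.2⟩
  calc ∑ m ∈ M, (2 : ℝ) ^ towerE m / m
      ≤ ∑ m ∈ M, 2 ^ 56 * ((APart m : ℝ) ^ (-(3/2) : ℝ) * (BPart m : ℝ) ^ (-(9/4) : ℝ)) := by
        refine Finset.sum_le_sum fun m hm => ?_
        obtain ⟨h0, _, hp⟩ := hmem m hm
        rw [← rpow_AB m h0 hp]
        exact powerful_term_bound m h0 hp
    _ = 2 ^ 56 * ∑ m ∈ M,
          ((APart m : ℝ) ^ (-(3/2) : ℝ) * (BPart m : ℝ) ^ (-(9/4) : ℝ)) := by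
        rw [Finset.mul_sum]
    _ ≤ 2 ^ 56 * (K32 * K94) := by
        refine mul_le_mul_of_nonneg_left ?_ (by positivity)
        have hle : ∑ m ∈ M,
            ((APart m : ℝ) ^ (-(3/2) : ℝ) * (BPart m : ℝ) ^ (-(9/4) : ℝ))
            ≤ ∑ q ∈ (Finset.Icc 1 x) ×ˢ (Finset.Icc 1 x),
                ((q.1 : ℝ) ^ (-(3/2) : ℝ) * (q.2 : ℝ) ^ (-(9/4) : ℝ)) := by
          refine sum_le_sum_of_maps M _ (fun m => (APart m, BPart m))
            (fun q => (q.1 : ℝ) ^ (-(3/2) : ℝ) * (q.2 : ℝ) ^ (-(9/4) : ℝ))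
            ?_ ?_ ?_
          · intro i hi j hj hij
            obtain ⟨hi0, _, hip⟩ := hmem i hi
            obtain ⟨hj0, _, hjp⟩ := hmem j hj
            have hA := congrArg Prod.fst hij
            have hB := congrArg Prod.snd hij
            simp only at hA hB
            rw [← AB_eq i hi0 hip, ← AB_eq j hj0 hjp, hA, hB]
          · intro m hm
            obtain ⟨h0, hx, hp⟩ := hmem m hm
            rw [Finset.mem_product, Finset.mem_Icc, Finset.mem_Icc]
            exact ⟨⟨APart_pos m, (APart_le m h0 hp).trans hx⟩,
              ⟨BPart_pos m, (BPart_le m h0 hp).trans hx⟩⟩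
          · intro q _
            positivity
        refine hle.trans ?_
        rw [Finset.sum_product]
        calc ∑ a ∈ Finset.Icc 1 x, ∑ b ∈ Finset.Icc 1 x,
              ((a : ℝ) ^ (-(3/2) : ℝ) * (b : ℝ) ^ (-(9/4) : ℝ))
            = (∑ a ∈ Finset.Icc 1 x, (a : ℝ) ^ (-(3/2) : ℝ))
              * (∑ b ∈ Finset.Icc 1 x, (b : ℝ) ^ (-(9/4) : ℝ)) := by
              rw [Finset.sum_mul]
              exact Finset.sum_congr rfl fun a _ => by rw [Finset.mul_sum]
          _ ≤ K32 * K94 := by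
              refine mul_le_mul (sum_rpow_le_K32 _) (sum_rpow_le_K94 _) ?_ K32_nonneg
              exact Finset.sum_nonneg fun b _ => Real.rpow_nonneg (Nat.cast_nonneg b) _
noncomputable def gw (q : Σ _ : ℕ, ℕ) : ℝ :=
  (if ∀ p ∈ q.1.primeFactors, 2 ≤ q.1.factorization p
    then (2 : ℝ) ^ towerE q.1 else 0) * (q.2.divisors.card : ℝ)

lemma gw_nonneg (q : Σ _ : ℕ, ℕ) : 0 ≤ gw q := by
  unfold gw
  apply mul_nonneg _ (Nat.cast_nonneg _)
  split_ifs
  · positivity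
  · exact le_refl 0

lemma step1 (n : ℕ) (hn : n ≠ 0) :
    (2 : ℝ) ^ towerE n ≤ gw ⟨pfPart n, sfPart n⟩ := by
  unfold gw
  rw [if_pos (powerful_pfPart n)]
  have hcast : ((sfPart n).divisors.card : ℝ)
      = 2 ^ (n.primeFactors.filter (fun p => n.factorization p = 1)).card := by
    rw [card_divisors_sfPart n]; push_cast; ring
  rw [hcast, towerE_split n hn, pow_add]
  exact le_of_eq (mul_comm _ _)

set_option maxHeartbeats 1000000 in
/-- `∑_{n ≤ x} 2^{E(n)} ≤ C x log x` for an absolute constant `C`. -/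
theorem stmt_6 : ∃ C : ℝ, ∀ x : ℕ, 2 ≤ x →
    ∑ n ∈ Finset.Icc 1 x, (2 : ℝ) ^ towerE n ≤ C * x * Real.log x := by
  use (1 + (Real.log 2)⁻¹) * (2 ^ 56 * (K32 * K94))
  intro x hx
  have hx0 : (0:ℝ) < x := by positivity
  have hlogx : 0 ≤ Real.log x := Real.log_natCast_nonneg x
  set T := (Finset.Icc 1 x).sigma (fun m => Finset.Icc 1 (x / m)) with hT
  set M := (Finset.Icc 1 x).filter
      (fun m => ∀ p ∈ m.primeFactors, 2 ≤ m.factorization p) with hMdef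
  have main : ∑ n ∈ Finset.Icc 1 x, (2 : ℝ) ^ towerE n
      ≤ (2 ^ 56 * (K32 * K94)) * ((x : ℝ) * (1 + Real.log x)) := by
    calc ∑ n ∈ Finset.Icc 1 x, (2 : ℝ) ^ towerE n
        ≤ ∑ n ∈ Finset.Icc 1 x, gw ⟨pfPart n, sfPart n⟩ := by
          refine Finset.sum_le_sum fun n hn => ?_
          rw [Finset.mem_Icc] at hn
          exact step1 n (by omega)
      _ ≤ ∑ q ∈ T, gw q := by
          refine sum_le_sum_of_maps _ _ (fun n => (⟨pfPart n, sfPart n⟩ : Σ _ : ℕ, ℕ)) gw ?_ ?_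
            (fun q _ => gw_nonneg q)
          · intro i hi j hj hij
            rw [Finset.mem_Icc] at hi hj
            have hfst : pfPart i = pfPart j := congrArg Sigma.fst hij
            have hsnd : sfPart i = sfPart j :=
              congrArg (fun q : Σ _ : ℕ, ℕ => q.2) hij
            have h1 := sf_mul_pf i (by omega)
            have h2 := sf_mul_pf j (by omega)
            rw [← h1, ← h2, hfst, hsnd]
          · intro n hn
            rw [Finset.mem_Icc] at hn
            have hn0 : n ≠ 0 := by omega
            rw [hT, Finset.mem_sigma, Finset.mem_Icc, Finset.mem_Icc]
            refine ⟨⟨one_le_pfPart n, (pfPart_le n hn0).trans hn.2⟩,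
              one_le_sfPart n, ?_⟩
            rw [Nat.le_div_iff_mul_le (one_le_pfPart n)]
            calc sfPart n * pfPart n = n := sf_mul_pf n hn0
              _ ≤ x := hn.2
      _ = ∑ m ∈ Finset.Icc 1 x,
            (if ∀ p ∈ m.primeFactors, 2 ≤ m.factorization p
              then (2 : ℝ) ^ towerE m else 0)
            * ∑ s ∈ Finset.Icc 1 (x / m), (s.divisors.card : ℝ) := by
          rw [hT, Finset.sum_sigma]
          exact Finset.sum_congr rfl fun m _ => by rw [Finset.mul_sum]; rfl
      _ ≤ ∑ m ∈ Finset.Icc 1 x,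
            (if ∀ p ∈ m.primeFactors, 2 ≤ m.factorization p
              then (2 : ℝ) ^ towerE m / m else 0)
            * ((x : ℝ) * (1 + Real.log x)) := by
          refine Finset.sum_le_sum fun m hm => ?_
          rw [Finset.mem_Icc] at hm
          have hm0 : 0 < m := hm.1
          have hmr : (0:ℝ) < m := by exact_mod_cast hm0
          by_cases hP : ∀ p ∈ m.primeFactors, 2 ≤ m.factorization p
          · rw [if_pos hP, if_pos hP]
            have hq : 1 ≤ x / m := (Nat.one_le_div_iff hm0).mpr hm.2
            have hq0 : (0:ℝ) < ((x / m : ℕ) : ℝ) := by exact_mod_cast hq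
            have hD : ∑ s ∈ Finset.Icc 1 (x / m), (s.divisors.card : ℝ)
                ≤ ((x / m : ℕ) : ℝ) * (1 + Real.log ((x / m : ℕ) : ℝ)) :=
              sum_divisors_card_le (x / m)
            have hc1 : ((x / m : ℕ) : ℝ) ≤ (x : ℝ) / m := Nat.cast_div_le
            have hc2 : 1 + Real.log ((x / m : ℕ) : ℝ) ≤ 1 + Real.log x := by
              have : ((x / m : ℕ) : ℝ) ≤ (x : ℝ) := by
                exact_mod_cast Nat.div_le_self x m
              gcongr
            have hc2' : 0 ≤ 1 + Real.log ((x / m : ℕ) : ℝ) := by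
              have : (1:ℝ) ≤ ((x / m : ℕ) : ℝ) := by exact_mod_cast hq
              have := Real.log_nonneg this
              linarith
            calc (2 : ℝ) ^ towerE m
                  * ∑ s ∈ Finset.Icc 1 (x / m), (s.divisors.card : ℝ)
                ≤ (2 : ℝ) ^ towerE m
                  * (((x / m : ℕ) : ℝ) * (1 + Real.log ((x / m : ℕ) : ℝ))) := by
                  refine mul_le_mul_of_nonneg_left hD (by positivity)
              _ ≤ (2 : ℝ) ^ towerE m * (((x : ℝ) / m) * (1 + Real.log x)) := by
                  refine mul_le_mul_of_nonneg_left ?_ (by positivity)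
                  refine mul_le_mul hc1 hc2 hc2' (by positivity)
              _ = (2 : ℝ) ^ towerE m / m * ((x : ℝ) * (1 + Real.log x)) := by
                  field_simp
          · rw [if_neg hP, if_neg hP, zero_mul, zero_mul]
      _ = (∑ m ∈ M, (2 : ℝ) ^ towerE m / m) * ((x : ℝ) * (1 + Real.log x)) := by
          rw [hMdef, Finset.sum_filter, Finset.sum_mul]
      _ ≤ (2 ^ 56 * (K32 * K94)) * ((x : ℝ) * (1 + Real.log x)) := by
          refine mul_le_mul_of_nonneg_right ?_
            (mul_nonneg hx0.le (by linarith))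
          rw [hMdef]
          exact powerful_sum_bound x
  refine main.trans ?_
  have hl2 : 0 < Real.log 2 := Real.log_pos (by norm_num)
  have hlx2 : Real.log 2 ≤ Real.log x := by
    apply Real.log_le_log (by norm_num)
    exact_mod_cast hx
  have hkey : 1 + Real.log x ≤ (1 + (Real.log 2)⁻¹) * Real.log x := by
    have h1 : (1:ℝ) ≤ (Real.log 2)⁻¹ * Real.log x := by
      rw [← div_eq_inv_mul, le_div_iff₀ hl2]
      linarith
    nlinarith
  have hKK : (0:ℝ) ≤ 2 ^ 56 * (K32 * K94) := by
    have h56 : (0:ℝ) ≤ 2 ^ 56 := by positivity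
    exact mul_nonneg h56 (mul_nonneg K32_nonneg K94_nonneg)
  calc (2 ^ 56 * (K32 * K94)) * ((x : ℝ) * (1 + Real.log x))
      ≤ (2 ^ 56 * (K32 * K94)) * ((x : ℝ) * ((1 + (Real.log 2)⁻¹) * Real.log x)) := by
        refine mul_le_mul_of_nonneg_left ?_ hKK
        exact mul_le_mul_of_nonneg_left hkey (le_of_lt hx0)
    _ = (1 + (Real.log 2)⁻¹) * (2 ^ 56 * (K32 * K94)) * x * Real.log x := by ring
end

section
/- There is an absolute constant $C$ such that for all $x \geq 2$ and $g \geq 2$, the number of $n \leq x$ such that $t^\#(n+1) = t^\#(n+2) = \cdots = t^\#(n+g)$ is at most $C x / \log g$. -/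
/-- `canon n` is a canonical representative of the nonplanar prime-tower tree of `n`:
it is the number obtained by recursively canonizing the exponents, sorting them, and
assigning them to the first `ω(n)` primes in order.  Thus two positive integers have
the same nonplanar prime-tower tree `t#` if and only if their `canon` values agree. -/
noncomputable def canon (n : ℕ) : ℕ :=
  if n ≤ 1 then n
  else
    ((((((n.primeFactors.sort (· ≤ ·)).attach).map
        (fun p => canon (n.factorization p.1))).insertionSort (· ≤ ·)).zipIdx).map
      (fun ie => Nat.nth Nat.Prime ie.2 ^ ie.1)).prod
decreasing_by
  exact factorization_lt ((Finset.mem_sort _).mp p.2)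

noncomputable def H (n : ℕ) : ℕ :=
  if n ≤ 1 then 0
  else (n.primeFactors.attach.sup fun p => H (n.factorization p.1)) + 1
decreasing_by
  exact factorization_lt p.2

lemma H_of_le {n : ℕ} (h : n ≤ 1) : H n = 0 := by rw [H]; simp [h]

lemma H_of_two_le {n : ℕ} (h : 2 ≤ n) :
    H n = (n.primeFactors.sup fun p => H (n.factorization p)) + 1 := by
  rw [H]
  rw [if_neg (by omega)]
  exact congrArg (· + 1) (Finset.sup_attach n.primeFactors (fun p => H (n.factorization p)))

lemma le_H {n p : ℕ} (hp : p ∈ n.primeFactors) :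
    H (n.factorization p) + 1 ≤ H n := by
  have h2 : 2 ≤ n := by
    rcases Nat.mem_primeFactors.mp hp with ⟨hprime, hdvd, hn⟩
    rcases Nat.lt_or_ge n 2 with h | h
    · interval_cases n <;> simp_all
    · exact h
  rw [H_of_two_le h2]
  exact Nat.succ_le_succ (Finset.le_sup (f := fun p => H (n.factorization p)) hp)

def tower : ℕ → ℕ
  | 0 => 1
  | (k+1) => 2 ^ tower k

lemma tower_pos (k : ℕ) : 0 < tower k := by
  induction k with
  | zero => simp [tower]
  | succ k ih => exact pow_pos (by norm_num) _

lemma lt_tower (k : ℕ) : k < tower k := by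
  induction k with
  | zero => simp [tower]
  | succ k ih =>
    have : tower k + 1 ≤ 2 ^ tower k := Nat.succ_le_of_lt Nat.lt_two_pow_self
    simp only [tower]; omega

lemma two_le_of_H {n : ℕ} (h : 1 ≤ H n) : 2 ≤ n := by
  by_contra hc
  rw [H_of_le (by omega)] at h
  omega

lemma H_tower (k : ℕ) : k ≤ H (tower k) := by
  induction k with
  | zero => simp
  | succ k ih =>
    have h2 : 2 ∈ (tower (k+1)).primeFactors := by
      rw [Nat.mem_primeFactors]
      refine ⟨Nat.prime_two, ?_, ?_⟩
      · show 2 ∣ 2 ^ tower k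
        exact dvd_pow_self 2 (tower_pos k).ne'
      · exact (pow_pos (by norm_num : 0 < 2) (tower k)).ne'
    have hf : (tower (k+1)).factorization 2 = tower k := by
      show (2 ^ tower k : ℕ).factorization 2 = tower k
      simp [Nat.Prime.factorization_pow Nat.prime_two]
    have := le_H h2
    rw [hf] at this
    omega

lemma le_tower_of_H : ∀ i e : ℕ, 1 ≤ e → i ≤ H e → tower i ≤ e := by
  intro i
  induction i with
  | zero => intro e he _; simpa [tower] using he
  | succ i ih =>
    intro e he hH
    have h2 : 2 ≤ e := two_le_of_H (by omega)
    rw [H_of_two_le h2] at hH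
    have hsup : i ≤ e.primeFactors.sup fun p => H (e.factorization p) := by omega
    have hne : e.primeFactors.Nonempty := Nat.nonempty_primeFactors.mpr h2
    obtain ⟨p, hp, hpe⟩ := Finset.exists_mem_eq_sup _ hne fun p => H (e.factorization p)
    have hip : i ≤ H (e.factorization p) := by rw [← hpe]; exact hsup
    have hfac1 : 1 ≤ e.factorization p := by
      rcases Nat.mem_primeFactors.mp hp with ⟨hpr, hdvd, hne'⟩
      exact (Nat.Prime.factorization_pos_of_dvd hpr hne' hdvd)
    have htf : tower i ≤ e.factorization p := ih _ hfac1 hip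
    calc tower (i+1) = 2 ^ tower i := rfl
      _ ≤ p ^ tower i := Nat.pow_le_pow_left (Nat.mem_primeFactors.mp hp).1.two_le _
      _ ≤ p ^ e.factorization p := Nat.pow_le_pow_right (Nat.mem_primeFactors.mp hp).1.pos htf
      _ ≤ e := Nat.le_of_dvd (by omega) (Nat.ordProj_dvd e p)

lemma exists_pow_dvd_of_H {n m : ℕ} (hm : 1 ≤ m) (h : m ≤ H n) :
    ∃ p : ℕ, p.Prime ∧ p ^ tower (m - 1) ∣ n := by
  have h2 : 2 ≤ n := two_le_of_H (by omega)
  rw [H_of_two_le h2] at h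
  have hne : n.primeFactors.Nonempty := Nat.nonempty_primeFactors.mpr h2
  obtain ⟨p, hp, hpe⟩ := Finset.exists_mem_eq_sup _ hne fun p => H (n.factorization p)
  have hip : m - 1 ≤ H (n.factorization p) := by rw [← hpe]; omega
  have hfac1 : 1 ≤ n.factorization p := by
    rcases Nat.mem_primeFactors.mp hp with ⟨hpr, hdvd, hne'⟩
    exact (Nat.Prime.factorization_pos_of_dvd hpr hne' hdvd)
  refine ⟨p, (Nat.mem_primeFactors.mp hp).1, ?_⟩
  exact dvd_trans (pow_dvd_pow p (le_tower_of_H _ _ hfac1 hip)) (Nat.ordProj_dvd n p)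
lemma nth_prime_pos (k : ℕ) : 0 < Nat.nth Nat.Prime k := (Nat.prime_nth_prime k).pos

lemma P_spec : ∀ (l : List ℕ) (k : ℕ), l ≠ [] → (∀ e ∈ l, 0 < e) →
    0 < ((l.zipIdx k).map fun ie => Nat.nth Nat.Prime ie.2 ^ ie.1).prod ∧
    (∀ p ∈ (((l.zipIdx k).map fun ie => Nat.nth Nat.Prime ie.2 ^ ie.1).prod).primeFactors,
      ∃ j, k ≤ j ∧ p = Nat.nth Nat.Prime j) ∧
    H ((l.zipIdx k).map fun ie => Nat.nth Nat.Prime ie.2 ^ ie.1).prod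
      = (l.map H).foldr max 0 + 1 := by
  intro l
  induction l with
  | nil => intro k h; exact absurd rfl h
  | cons e l ih =>
    intro k _ hpos
    have he : 0 < e := hpos e List.mem_cons_self
    set q := Nat.nth Nat.Prime k with hq
    have hqp : q.Prime := Nat.prime_nth_prime k
    have hqe2 : 2 ≤ q ^ e := by
      calc 2 ≤ q := hqp.two_le
      _ = q ^ 1 := (pow_one q).symm
      _ ≤ q ^ e := Nat.pow_le_pow_right hqp.pos he
    have hpfqe : (q ^ e).primeFactors = {q} := by rw [Nat.primeFactors_pow _ he.ne', Nat.Prime.primeFactors hqp]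
    have hfacqe : (q ^ e).factorization = Finsupp.single q e := hqp.factorization_pow
    rcases List.eq_nil_or_concat l with hl | _
    · subst hl
      simp only [List.zipIdx_cons, List.zipIdx_nil, List.map_cons, List.map_nil, List.prod_cons, List.prod_nil,
        mul_one]
      refine ⟨by positivity, ?_, ?_⟩
      · intro p hp
        rw [hpfqe, Finset.mem_singleton] at hp
        exact ⟨k, le_refl k, hp⟩
      · rw [H_of_two_le hqe2, hpfqe]
        simp [hfacqe, Finsupp.single_eq_same]
    · have hlne : l ≠ [] := by rintro rfl; simp_all
      obtain ⟨hRpos, hRpf, hRH⟩ := ih (k + 1) hlne (fun x hx => hpos x (List.mem_cons_of_mem _ hx))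
      set R := ((l.zipIdx (k+1)).map fun ie => Nat.nth Nat.Prime ie.2 ^ ie.1).prod with hR
      have hR2 : 2 ≤ R := two_le_of_H (by omega)
      have hqR : q ∉ R.primeFactors := by
        intro hmem
        obtain ⟨j, hj, hjq⟩ := hRpf q hmem
        have : k = j := Nat.nth_injective Nat.infinite_setOf_prime hjq
        omega
      have hstep : ((List.zipIdx (e :: l) k).map (fun ie => Nat.nth Nat.Prime ie.2 ^ ie.1)).prod = q ^ e * R := by
        simp only [List.zipIdx_cons, List.map_cons, List.prod_cons, hR, hq]
      rw [hstep]
      have hP2 : 2 ≤ q ^ e * R := by nlinarith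
      have hpf : (q ^ e * R).primeFactors = {q} ∪ R.primeFactors := by
        rw [Nat.primeFactors_mul (by positivity) (by omega), hpfqe]
      have hfac : (q ^ e * R).factorization = Finsupp.single q e + R.factorization :=
        by rw [Nat.factorization_mul (by positivity) (by omega), hfacqe]
      refine ⟨by positivity, ?_, ?_⟩
      · intro p hp
        rw [hpf, Finset.mem_union, Finset.mem_singleton] at hp
        rcases hp with rfl | hp
        · exact ⟨k, le_refl k, rfl⟩
        · obtain ⟨j, hj, hjq⟩ := hRpf p hp
          exact ⟨j, by omega, hjq⟩
      · rw [H_of_two_le hP2, hpf, Finset.sup_union, Finset.sup_singleton]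
        have h1 : (q ^ e * R).factorization q = e := by
          have hnd : ¬ q ∣ R := fun hdvd => hqR (Nat.mem_primeFactors.mpr ⟨hqp, hdvd, by omega⟩)
          rw [hfac]
          simp [Finsupp.single_eq_same, Nat.factorization_eq_zero_of_not_dvd hnd]
        have h2 : (R.primeFactors.sup fun p => H ((q ^ e * R).factorization p))
            = R.primeFactors.sup fun p => H (R.factorization p) := by
          apply Finset.sup_congr rfl
          intro p hp
          have hpq : p ≠ q := by rintro rfl; exact hqR hp
          rw [hfac]
          simp [Finsupp.single_apply, if_neg (Ne.symm hpq)]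
        rw [h1, h2]
        rw [H_of_two_le hR2] at hRH
        simp only [List.map_cons, List.foldr_cons]
        omega
lemma canon_pos {n : ℕ} (h : 1 ≤ n) : 1 ≤ canon n := by
  rw [canon]
  split
  · exact h
  · show 0 < _
    apply List.prod_pos
    intro a ha
    obtain ⟨ie, _, rfl⟩ := List.mem_map.mp ha
    exact pow_pos (nth_prime_pos ie.2) ie.1

instance : Std.Commutative (max : ℕ → ℕ → ℕ) := ⟨fun a b => max_comm a b⟩
instance : Std.Associative (max : ℕ → ℕ → ℕ) := ⟨fun a b c => max_assoc a b c⟩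

lemma foldr_max_sort (s : Finset ℕ) (f : ℕ → ℕ) :
    ((s.sort (· ≤ ·)).map f).foldr max 0 = s.sup f := by
  haveI : LeftCommutative (max : ℕ → ℕ → ℕ) := ⟨fun a b c => max_left_comm a b c⟩
  rw [Finset.sup_def]
  have h1 : (Multiset.map f s.val) = ↑((s.sort (· ≤ ·)).map f) := by
    rw [← Finset.sort_eq (r := (· ≤ ·)) (s := s), Multiset.map_coe]
  rw [h1]
  show _ = Multiset.sup _
  rw [Multiset.sup]
  rw [Multiset.fold_eq_foldr, Multiset.coe_foldr]
  rfl

lemma H_canon : ∀ n : ℕ, H (canon n) = H n := by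
  intro n
  induction n using Nat.strong_induction_on with
  | _ n ih =>
    rcases le_or_gt n 1 with h1 | h1
    · rw [canon, if_pos h1]
    · rw [canon, if_neg (by omega)]
      set slist := n.primeFactors.sort (· ≤ ·) with hslist
      set l₀ := slist.attach.map (fun p => canon (n.factorization p.1)) with hl₀
      set l := l₀.insertionSort (· ≤ ·) with hl
      have hperm : List.Perm l l₀ := List.perm_insertionSort _ _
      have hslist_ne : slist ≠ [] := by
        have : slist.length ≠ 0 := by
          rw [hslist, Finset.length_sort]
          exact Finset.card_ne_zero_of_mem
            (Nat.mem_primeFactors.mpr ⟨(Nat.minFac_prime (by omega)), Nat.minFac_dvd n, by omega⟩)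
        intro hc; rw [hc] at this; simp at this
      have hlne : l ≠ [] := by
        intro hc
        have := hperm.length_eq
        rw [hc] at this
        simp [hl₀] at this
        exact hslist_ne (List.length_eq_zero_iff.mp this.symm)
      have hlpos : ∀ e ∈ l, 0 < e := by
        intro e hel
        have : e ∈ l₀ := hperm.mem_iff.mp hel
        obtain ⟨p, hp, rfl⟩ := List.mem_map.mp this
        apply canon_pos
        have hmem : p.1 ∈ n.primeFactors := (Finset.mem_sort _).mp p.2
        rcases Nat.mem_primeFactors.mp hmem with ⟨hpr, hdvd, hne⟩
        exact hpr.factorization_pos_of_dvd hne hdvd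
      have hspec := (P_spec l 0 hlne hlpos).2.2
      rw [hspec]
      have hmap : l.map H = (l₀.map H).insertionSort (· ≤ ·) ∨ True := Or.inr trivial
      haveI : LeftCommutative (max : ℕ → ℕ → ℕ) := ⟨fun a b c => max_left_comm a b c⟩
      have hfold : (l.map H).foldr max 0 = (l₀.map H).foldr max 0 :=
        (hperm.map H).foldr_eq 0
      rw [hfold, hl₀, List.map_map]
      have hcongr : slist.attach.map (H ∘ fun p => canon (n.factorization p.1))
          = slist.attach.map (fun p => H (n.factorization p.1)) := by
        apply List.map_congr_left
        intro p _
        have hmem : p.1 ∈ n.primeFactors := (Finset.mem_sort _).mp p.2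
        exact ih _ (factorization_lt hmem)
      rw [hcongr]
      rw [List.attach_map_val (l := slist) (f := fun p => H (n.factorization p))]
      rw [foldr_max_sort]
      rw [H_of_two_le h1]

lemma card_dvd_le (X d : ℕ) (hd : 1 ≤ d) :
    ((Finset.Icc 1 X).filter (fun k => d ∣ k)).card ≤ X / d := by
  have h : ((Finset.Icc 1 X).filter (fun k => d ∣ k)).card ≤ (Finset.Icc 1 (X/d)).card := by
    apply Finset.card_le_card_of_injOn (fun k => k / d)
    · intro k hk
      simp only [Finset.mem_coe, Finset.mem_filter, Finset.mem_Icc] at hk ⊢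
      obtain ⟨⟨hk1, hkX⟩, hdk⟩ := hk
      constructor
      · exact (Nat.one_le_div_iff (by omega)).mpr (Nat.le_of_dvd (by omega) hdk)
      · exact Nat.div_le_div_right hkX
    · intro k1 hk1 k2 hk2 heq
      simp only [Finset.mem_coe, Finset.mem_filter, Finset.mem_Icc] at hk1 hk2
      have heq' : k1 / d = k2 / d := heq
      have e1 : d * (k1 / d) = k1 := Nat.mul_div_cancel' hk1.2
      have e2 : d * (k2 / d) = k2 := Nat.mul_div_cancel' hk2.2
      rw [← e1, ← e2, heq']
  simpa [Nat.card_Icc] using h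

open scoped Classical in
lemma card_pow_dvd_le (X T : ℕ) (hT : 1 ≤ T) :
    ((Finset.Icc 1 X).filter (fun k => ∃ p, p.Prime ∧ p ^ T ∣ k)).card ≤
      ∑ j ∈ Finset.Icc 2 X, X / j ^ T := by
  classical
  have hsub : (Finset.Icc 1 X).filter (fun k => ∃ p, p.Prime ∧ p ^ T ∣ k) ⊆
      (Finset.Icc 2 X).biUnion (fun j => (Finset.Icc 1 X).filter (fun k => j ^ T ∣ k)) := by
    intro k hk
    simp only [Finset.mem_filter, Finset.mem_Icc] at hk
    obtain ⟨⟨hk1, hkX⟩, p, hp, hdvd⟩ := hk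
    have hpk : p ^ T ≤ k := Nat.le_of_dvd (by omega) hdvd
    have hpp : p ≤ p ^ T := Nat.le_self_pow (by omega) p
    rw [Finset.mem_biUnion]
    exact ⟨p, Finset.mem_Icc.mpr ⟨hp.two_le, by omega⟩,
      Finset.mem_filter.mpr ⟨Finset.mem_Icc.mpr ⟨hk1, hkX⟩, hdvd⟩⟩
  calc _ ≤ ((Finset.Icc 2 X).biUnion
        (fun j => (Finset.Icc 1 X).filter (fun k => j ^ T ∣ k))).card :=
        Finset.card_le_card hsub
    _ ≤ ∑ j ∈ Finset.Icc 2 X, ((Finset.Icc 1 X).filter (fun k => j ^ T ∣ k)).card :=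
        Finset.card_biUnion_le
    _ ≤ ∑ j ∈ Finset.Icc 2 X, X / j ^ T := by
        apply Finset.sum_le_sum
        intro j hj
        have : 2 ≤ j := (Finset.mem_Icc.mp hj).1
        exact card_dvd_le X (j ^ T) (Nat.one_le_pow _ _ (by omega))

lemma sum_inv_sq_le : ∀ X : ℕ, 1 ≤ X → ∑ j ∈ Finset.Icc 2 X, (1:ℝ)/(j:ℝ)^2 ≤ 1 - 1/(X:ℝ) := by
  intro X
  induction X with
  | zero => omega
  | succ X ih =>
    intro _
    rcases Nat.eq_zero_or_pos X with rfl | hX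
    · rw [Finset.Icc_eq_empty (by omega)]
      norm_num
    · rw [Finset.sum_Icc_succ_top (by omega)]
      have hXr : (0:ℝ) < X := by exact_mod_cast hX
      have hX1 : (0:ℝ) < (X:ℝ) + 1 := by linarith
      have key : (1:ℝ)/((X:ℝ)+1)^2 ≤ 1/(X:ℝ) - 1/((X:ℝ)+1) := by
        have h1 : (1:ℝ)/((X:ℝ)+1)^2 ≤ 1/((X:ℝ)*((X:ℝ)+1)) := by
          apply one_div_le_one_div_of_le
          · positivity
          · nlinarith
        have h2 : (1:ℝ)/((X:ℝ)*((X:ℝ)+1)) = 1/(X:ℝ) - 1/((X:ℝ)+1) := by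
          field_simp
          ring
        linarith
      have := ih hX
      push_cast
      push_cast at this
      linarith

set_option maxHeartbeats 1000000 in
open scoped Classical in
lemma count_bound (X T : ℕ) (hT : 2 ≤ T) (hX : 1 ≤ X) :
    (((Finset.Icc 1 X).filter (fun k => ∃ p, p.Prime ∧ p ^ T ∣ k)).card : ℝ) ≤
      4 * X / 2 ^ T := by
  have h1 := card_pow_dvd_le X T (by omega)
  have h2 : (((Finset.Icc 1 X).filter (fun k => ∃ p, p.Prime ∧ p ^ T ∣ k)).card : ℝ) ≤
      ∑ j ∈ Finset.Icc 2 X, ((X / j ^ T : ℕ) : ℝ) :=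
    le_trans (Nat.cast_le.mpr h1) (le_of_eq (Nat.cast_sum _ _))
  have hterm : ∀ j ∈ Finset.Icc 2 X, ((X / j ^ T : ℕ) : ℝ) ≤ (4 * (X:ℝ) / 2 ^ T) * (1 / (j:ℝ)^2) := by
    intro j hj
    have hj2 : 2 ≤ j := (Finset.mem_Icc.mp hj).1
    have hnat : 2 ^ T * j ^ 2 ≤ 4 * j ^ T := by
      have e : T - 2 + 2 = T := by omega
      have hle : 2 ^ (T-2) ≤ j ^ (T-2) := Nat.pow_le_pow_left hj2 _
      calc 2 ^ T * j ^ 2 = 2 ^ (T-2) * 2 ^ 2 * j ^ 2 := by rw [← pow_add, e]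
        _ ≤ j ^ (T-2) * 2 ^ 2 * j ^ 2 := by
            exact Nat.mul_le_mul_right _ (Nat.mul_le_mul_right _ hle)
        _ = 4 * (j ^ (T-2) * j ^ 2) := by ring
        _ = 4 * j ^ T := by rw [← pow_add, e]
    have hcast : ((X / j ^ T : ℕ) : ℝ) ≤ (X : ℝ) / ((j : ℝ) ^ T) := by
      have := Nat.cast_div_le (m := X) (n := j ^ T) (α := ℝ)
      push_cast at this ⊢
      exact this
    have hjr : (0:ℝ) < (j:ℝ) := by positivity
    have hstep : (X : ℝ) / ((j : ℝ) ^ T) ≤ (4 * X) / (2 ^ T * (j:ℝ) ^ 2) := by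
      rw [div_le_div_iff₀ (by positivity) (by positivity)]
      have hc : ((2:ℝ) ^ T * (j:ℝ) ^ 2) ≤ 4 * (j:ℝ) ^ T := by exact_mod_cast hnat
      have hX0 : (0:ℝ) ≤ (X:ℝ) := by positivity
      nlinarith
    have heq : (4 * (X:ℝ)) / (2 ^ T * (j:ℝ) ^ 2) = (4 * (X:ℝ) / 2 ^ T) * (1 / (j:ℝ)^2) := by
      rw [div_mul_div_comm, mul_one]
    linarith [hstep, hcast, heq.le]
  have h3 : ∑ j ∈ Finset.Icc 2 X, ((X / j ^ T : ℕ) : ℝ) ≤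
      ∑ j ∈ Finset.Icc 2 X, (4 * (X:ℝ) / 2 ^ T) * (1 / (j:ℝ)^2) := Finset.sum_le_sum hterm
  have h4 : ∑ j ∈ Finset.Icc 2 X, (4 * (X:ℝ) / 2 ^ T) * (1 / (j:ℝ)^2)
      = (4 * (X:ℝ) / 2 ^ T) * ∑ j ∈ Finset.Icc 2 X, (1 / (j:ℝ)^2) := by rw [Finset.mul_sum]
  have h5 : (4 * (X:ℝ) / 2 ^ T) * ∑ j ∈ Finset.Icc 2 X, (1 / (j:ℝ)^2) ≤
      (4 * (X:ℝ) / 2 ^ T) * 1 := by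
    apply mul_le_mul_of_nonneg_left _ (by positivity)
    have hXr : (0:ℝ) < X := by exact_mod_cast hX
    have hpos : (0:ℝ) < 1/(X:ℝ) := by positivity
    linarith [sum_inv_sq_le X hX]
  rw [mul_one] at h5
  linarith

theorem stmt_aux (x g : ℕ) (hx : 2 ≤ x) (hg : 2 ≤ g)
    [DecidablePred fun n => ∀ i, 1 ≤ i → i ≤ g → canon (n + i) = canon (n + 1)] :
    (((Finset.Icc 1 x).filter
        (fun n => ∀ i, 1 ≤ i → i ≤ g → canon (n + i) = canon (n + 1))).card : ℝ) ≤
      30 * x / Real.log g := by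
  classical
  have hg1 : (1:ℝ) < (g:ℝ) := by exact_mod_cast hg
  have hlogg : 0 < Real.log g := Real.log_pos hg1
  set A := (Finset.Icc 1 x).filter
      (fun n => ∀ i, 1 ≤ i → i ≤ g → canon (n + i) = canon (n + 1)) with hA
  rcases lt_or_ge g 8 with hg8 | hg8
  · have hcard : (A.card : ℝ) ≤ x := by
      have : A.card ≤ (Finset.Icc 1 x).card := Finset.card_le_card (Finset.filter_subset _ _)
      rw [Nat.card_Icc] at this
      exact_mod_cast by omega
    have hlog30 : Real.log g ≤ 30 := by
      have h1 : Real.log g ≤ (g:ℝ) - 1 := Real.log_le_sub_one_of_pos (by linarith)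
      have : (g:ℝ) ≤ 8 := by exact_mod_cast by omega
      linarith
    rw [le_div_iff₀ hlogg]
    have hx0 : (0:ℝ) ≤ (x:ℝ) := by positivity
    nlinarith [hlogg.le]
  · -- main case
    have h24 : 2 * tower 2 ≤ g := by
      have : tower 2 = 4 := rfl
      omega
    have hex : ∃ m, 2 ≤ m ∧ 2 * tower m ≤ g ∧ ¬(2 * tower (m+1) ≤ g) := by
      refine ⟨Nat.findGreatest (fun m => 2 * tower m ≤ g) g, ?_, ?_, ?_⟩
      · exact Nat.le_findGreatest (P := fun m => 2 * tower m ≤ g) (by omega) h24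
      · exact Nat.findGreatest_spec (m := 2) (P := fun m => 2 * tower m ≤ g) (by omega) h24
      · intro hc
        have hle := Nat.findGreatest_le (P := fun m => 2 * tower m ≤ g) g
        have hspec : 2 * tower (Nat.findGreatest (fun m => 2 * tower m ≤ g) g) ≤ g :=
          Nat.findGreatest_spec (m := 2) (P := fun m => 2 * tower m ≤ g) (by omega) h24
        have hne : Nat.findGreatest (fun m => 2 * tower m ≤ g) g ≠ g := by
          intro he
          rw [he] at hspec
          have := lt_tower g
          omega
        exact Nat.findGreatest_is_greatest (P := fun m => 2 * tower m ≤ g) (Nat.lt_succ_self _) (by omega) hc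
    obtain ⟨m, hm2, hspecm, hmax⟩ := hex
    obtain ⟨k, rfl⟩ : ∃ k, m = k + 1 := ⟨m - 1, by omega⟩
    set m := k + 1 with hmdef
    have hk1 : 1 ≤ k := by omega
    set T' := tower k with hT'
    have hT'2 : 2 ≤ T' := by have := lt_tower k; omega
    have htm : tower m = 2 ^ T' := rfl
    have htmpos : 0 < tower m := tower_pos m
    -- key step
    have key : ∀ n ∈ A, ∃ p, p.Prime ∧ p ^ T' ∣ (n+1) := by
      intro n hn
      rw [hA, Finset.mem_filter] at hn
      obtain ⟨hnI, hprop⟩ := hn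
      set D := 2 * tower m with hD
      have hDpos : 0 < D := by omega
      set s := (n + tower m) % D with hs
      have hslt : s < D := Nat.mod_lt _ hDpos
      set i := D - s with hi
      have hi1 : 1 ≤ i := by omega
      have hig : i ≤ g := le_trans (by omega) hspecm
      have hdm : D * ((n + tower m) / D) + s = n + tower m := Nat.div_add_mod _ _
      have hNrw : n + i = tower m + D * ((n + tower m) / D) := by omega
      have hNmod : (n + i) % D = tower m := by
        rw [hNrw, Nat.add_mul_mod_self_left]
        exact Nat.mod_eq_of_lt (by omega)
      set N := n + i with hN
      have hdm2 : D * (N / D) + N % D = N := Nat.div_add_mod _ _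
      have hfact : N = (2 ^ T') * (2 * (N / D) + 1) := by
        have hu : N = 2 * tower m * (N / D) + tower m := by rw [← hD]; omega
        have hr : tower m * (2 * (N / D) + 1) = 2 * tower m * (N / D) + tower m := by ring
        rw [← htm, hr]
        exact hu
      have hodd : ¬ (2:ℕ) ∣ (2 * (N / D) + 1) := by omega
      have hfacN : N.factorization 2 = T' := by
        rw [hfact, Nat.factorization_mul (by positivity) (by omega)]
        simp [Nat.Prime.factorization_pow Nat.prime_two,
          Nat.factorization_eq_zero_of_not_dvd hodd]
      have h2N : 2 ∈ N.primeFactors := by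
        rw [Nat.mem_primeFactors]
        refine ⟨Nat.prime_two, ?_, by omega⟩
        rw [hfact]
        exact Dvd.dvd.mul_right (dvd_pow_self 2 (by omega)) _
      have hHN : m ≤ H N := by
        have h1' := le_H h2N
        rw [hfacN] at h1'
        have h2' : k ≤ H T' := by rw [hT']; exact H_tower k
        omega
      have hcanon : canon N = canon (n + 1) := hprop i hi1 hig
      have hH1 : m ≤ H (n + 1) := by
        rw [← H_canon (n+1), ← hcanon, H_canon]
        exact hHN
      obtain ⟨p, hp, hdvd⟩ := exists_pow_dvd_of_H (show 1 ≤ m by omega) hH1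
      exact ⟨p, hp, by rw [hmdef, Nat.add_sub_cancel] at hdvd; exact hdvd⟩
    -- injection into B
    set B := (Finset.Icc 1 (x+1)).filter (fun k' => ∃ p, p.Prime ∧ p ^ T' ∣ k') with hB
    have hAB : A.card ≤ B.card := by
      apply Finset.card_le_card_of_injOn (fun n => n + 1)
      · intro n hn
        have hkey := key n hn
        simp only [Finset.mem_coe, hA, Finset.mem_filter, Finset.mem_Icc] at hn
        simp only [Finset.mem_coe, hB, Finset.mem_filter, Finset.mem_Icc]
        exact ⟨⟨by omega, by omega⟩, hkey⟩
      · intro a _ b _ h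
        simpa using h
    have hBbound := count_bound (x+1) T' hT'2 (by omega)
    -- real arithmetic
    have hTmr : (0:ℝ) < (tower m : ℝ) := by exact_mod_cast htmpos
    have h2T : ((2:ℝ) ^ T') = (tower m : ℝ) := by
      rw [htm]; push_cast; ring
    have h1 : (A.card : ℝ) ≤ 4 * ((x:ℝ)+1) / (tower m : ℝ) := by
      rw [← h2T]
      calc (A.card : ℝ) ≤ (B.card : ℝ) := by exact_mod_cast hAB
        _ ≤ 4 * (↑(x+1) : ℝ) / 2 ^ T' := hBbound
        _ = 4 * ((x:ℝ)+1) / 2 ^ T' := by push_cast; ring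
    have hgn : g < 2 ^ (2 * tower m) := by
      have h1' : g < 2 * tower (m+1) := by omega
      have h2' : tower (m+1) = 2 ^ tower m := rfl
      have h3' : 2 * 2 ^ tower m = 2 ^ (tower m + 1) := by rw [pow_succ]; ring
      have h4' : 2 ^ (tower m + 1) ≤ 2 ^ (2 * tower m) :=
        Nat.pow_le_pow_right (by omega) (by omega)
      omega
    have hloggT : Real.log g < 2 * (tower m : ℝ) := by
      have hgr : (g:ℝ) < (2:ℝ) ^ (2 * tower m) := by exact_mod_cast hgn
      have := Real.log_lt_log (by linarith) hgr
      rw [Real.log_pow] at this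
      have hlog2 : Real.log 2 ≤ 1 := by
        have := Real.log_le_sub_one_of_pos (by norm_num : (0:ℝ) < 2)
        linarith
      have hcast : ((2 * tower m : ℕ) : ℝ) = 2 * (tower m : ℝ) := by push_cast; ring
      rw [hcast] at this
      nlinarith [Real.log_nonneg (by norm_num : (1:ℝ) ≤ 2), hTmr]
    have hx1 : (x:ℝ) + 1 ≤ 2 * (x:ℝ) := by
      have : (2:ℝ) ≤ (x:ℝ) := by exact_mod_cast hx
      linarith
    have h2 : (A.card : ℝ) ≤ 8 * (x:ℝ) / (tower m : ℝ) := by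
      refine le_trans h1 ((div_le_div_iff_of_pos_right hTmr).mpr (by linarith))
    have h3 : 8 * (x:ℝ) / (tower m : ℝ) ≤ 16 * (x:ℝ) / Real.log g := by
      rw [div_le_div_iff₀ hTmr hlogg]
      have hx0 : (0:ℝ) ≤ (x:ℝ) := by positivity
      nlinarith
    have h4 : 16 * (x:ℝ) / Real.log g ≤ 30 * (x:ℝ) / Real.log g := by
      have hx0 : (0:ℝ) ≤ (x:ℝ) := by positivity
      exact (div_le_div_iff_of_pos_right hlogg).mpr (by linarith)
    linarith

open scoped Classical in
/-- Uniformly in `x ≥ 2` and `g ≥ 2`, the number of `n ≤ x` with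
`t#(n+1) = t#(n+2) = ⋯ = t#(n+g)` is `O(x / log g)`. -/
theorem stmt_14 : ∃ C : ℝ, ∀ x g : ℕ, 2 ≤ x → 2 ≤ g →
    (((Finset.Icc 1 x).filter
        (fun n => ∀ i, 1 ≤ i → i ≤ g → canon (n + i) = canon (n + 1))).card : ℝ) ≤
      C * x / Real.log g := by
  exact ⟨30, fun x g hx hg => @stmt_aux x g hx hg (fun a => Classical.propDecidable _)⟩
end
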